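/- arXiv:1809.00936 — 5 statements merged into one kernel-verified Lean document; each statement's English description precedes it below -/
import Mathlib

section
/- In X = ℝ with Y = (-3,3), the transportation-annihilation pre-distance W⁰_p fails the triangle inequality: for μ = δ_{-2}, ν = δ_2, ξ = 0 (the zero measure), W⁰_p(μ,ν) = 4 while W⁰_p(μ,ξ) + W⁰_p(ξ,ν) = 2. -/
open MeasureTheory Metric Set
open scoped ENNReal NNReal

/-- `d*(x,y) := inf_{z ∈ X \ Y} (d(x,z) + d(z,y))`. -/
noncomputable def dstar {X : Type*} [MetricSpace X] (Y : Set X) (x y : X) : ℝ :=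
  ⨅ z : (Yᶜ : Set X), (dist x (z : X) + dist (z : X) y)

/-- Couplings of two measures. -/
def Cpl {α : Type*} [MeasurableSpace α] (μ ν : Measure α) : Set (Measure (α × α)) :=
  {q | q.map Prod.fst = μ ∧ q.map Prod.snd = ν}

/-- `p`-transportation cost of a plan `q` with respect to a cost function `c`. -/
noncomputable def tcost {α : Type*} [MeasurableSpace α] (c : α → α → ℝ) (p : ℝ)
    (q : Measure (α × α)) : ℝ≥0∞ :=
  ∫⁻ z, ENNReal.ofReal (c z.1 z.2 ^ p) ∂q

/-- The `L^p`-transportation distance `W̃_p` between charged (sub)probability measures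
`σ = (σ⁺,σ⁻)` and `τ = (τ⁺,τ⁻)`: infimum over decomposed couplings `q^{++},q^{+-},q^{-+},q^{--}`
with the appropriate marginals, transporting like charges at cost `d` and opposite charges at
cost `d*`. -/
noncomputable def Wtilde {X : Type*} [MetricSpace X] [MeasurableSpace X] (Y : Set X) (p : ℝ)
    (σ τ : Measure X × Measure X) : ℝ≥0∞ :=
  (⨅ Q : {Q : Measure (X × X) × Measure (X × X) × Measure (X × X) × Measure (X × X) //
        (Q.1 + Q.2.1).map Prod.fst = σ.1 ∧ (Q.2.2.1 + Q.2.2.2).map Prod.fst = σ.2 ∧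
        (Q.1 + Q.2.2.1).map Prod.snd = τ.1 ∧ (Q.2.1 + Q.2.2.2).map Prod.snd = τ.2},
      tcost (fun x y => dist x y) p Q.1.1 + tcost (dstar Y) p Q.1.2.1 +
        tcost (dstar Y) p Q.1.2.2.1 + tcost (fun x y => dist x y) p Q.1.2.2.2) ^ (1/p)

/-- The transportation-annihilation pre-distance `W⁰_p` between subprobabilities on `Y`. -/
noncomputable def W0 {X : Type*} [MetricSpace X] [MeasurableSpace X] (Y : Set X) (p : ℝ)
    (μ ν : Measure X) : ℝ≥0∞ :=
  ⨅ re : {re : Measure X × Measure X //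
      (μ + (2 : ℝ≥0∞) • re.1) Set.univ = 1 ∧ (ν + (2 : ℝ≥0∞) • re.2) Set.univ = 1},
    Wtilde Y p (μ + re.1.1, re.1.1) (ν + re.1.2, re.1.2)

notation "Y3" => Set.Ioo (-3 : ℝ) 3

instance : Nonempty ((Y3ᶜ : Set ℝ)) := ⟨⟨3, by simp⟩⟩

lemma bdd (x y : ℝ) : BddBelow (Set.range fun z : (Y3ᶜ : Set ℝ) => dist x (z : ℝ) + dist (z : ℝ) y) :=
  ⟨0, by rintro t ⟨z, rfl⟩; positivity⟩

lemma dstar_nonneg (x y : ℝ) : 0 ≤ dstar Y3 x y :=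
  le_ciInf fun z => by positivity

lemma dstar_le (x y z : ℝ) (hz : z ∈ (Y3ᶜ : Set ℝ)) :
    dstar Y3 x y ≤ dist x z + dist z y := ciInf_le (bdd x y) ⟨z, hz⟩

lemma one_le_dist_of_mem {a : ℝ} (ha : a = -2 ∨ a = 2) {z : ℝ} (hz : z ∈ (Y3ᶜ : Set ℝ)) :
    1 ≤ dist z a := by
  simp only [Set.mem_compl_iff, Set.mem_Ioo, not_and_or, not_lt] at hz
  rcases ha with rfl | rfl <;> rcases hz with h | h <;>
    rw [Real.dist_eq, le_abs] <;> [right; left; right; left] <;> linarith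

/-- `2 ≤ d(y,a) + d*(y,a)` when all of `Yᶜ` is at distance ≥ 1 from `a`. -/
lemma two_le_dist_add_dstar_right {a : ℝ} (ha : a = -2 ∨ a = 2) (y : ℝ) :
    2 ≤ dist y a + dstar Y3 y a := by
  have h : 2 - dist y a ≤ dstar Y3 y a := by
    refine le_ciInf fun z => ?_
    have h1 : 1 ≤ dist (z : ℝ) a := one_le_dist_of_mem ha z.2
    have h2 : dist (z : ℝ) a ≤ dist (z : ℝ) y + dist y a := dist_triangle _ _ _
    have h3 : dist y (z : ℝ) = dist (z : ℝ) y := dist_comm _ _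
    linarith
  linarith

lemma two_le_dist_add_dstar_left {a : ℝ} (ha : a = -2 ∨ a = 2) (y : ℝ) :
    2 ≤ dist a y + dstar Y3 a y := by
  have h : 2 - dist a y ≤ dstar Y3 a y := by
    refine le_ciInf fun z => ?_
    have h1 : 1 ≤ dist (z : ℝ) a := one_le_dist_of_mem ha z.2
    have h2 : dist (z : ℝ) a ≤ dist (z : ℝ) a := le_refl _
    have h3 : dist a (z : ℝ) = dist (z : ℝ) a := dist_comm _ _
    have h4 : dist (z : ℝ) a ≤ dist (z : ℝ) y + dist y a := dist_triangle _ _ _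
    have h5 : dist y a = dist a y := dist_comm _ _
    linarith
  linarith

lemma dstar_lipschitz_right (x : ℝ) : LipschitzWith 1 (dstar Y3 x) := by
  apply LipschitzWith.of_le_add
  intro y y'
  have h : dstar Y3 x y - dist y y' ≤ dstar Y3 x y' := by
    refine le_ciInf fun z => ?_
    have h1 : dstar Y3 x y ≤ dist x (z : ℝ) + dist (z : ℝ) y := dstar_le x y z z.2
    have h2 : dist (z : ℝ) y ≤ dist (z : ℝ) y' + dist y' y := dist_triangle _ _ _
    have h3 : dist y y' = dist y' y := dist_comm _ _
    linarith
  linarith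

lemma dstar_lipschitz_left (y : ℝ) : LipschitzWith 1 (fun x => dstar Y3 x y) := by
  apply LipschitzWith.of_le_add
  intro x x'
  have h : dstar Y3 x y - dist x x' ≤ dstar Y3 x' y := by
    refine le_ciInf fun z => ?_
    have h1 : dstar Y3 x y ≤ dist x (z : ℝ) + dist (z : ℝ) y := dstar_le x y z z.2
    have h2 : dist x (z : ℝ) ≤ dist x x' + dist x' (z : ℝ) := dist_triangle _ _ _
    linarith
  linarith

lemma dstar_m2_m3 : dstar Y3 (-2) (-3) ≤ 1 := by
  have := dstar_le (-2) (-3) (-3) (by simp)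
  rw [Real.dist_eq, Real.dist_eq] at this
  norm_num at this
  linarith

lemma dstar_3_2 : dstar Y3 3 2 ≤ 1 := by
  have := dstar_le 3 2 3 (by simp)
  rw [Real.dist_eq, Real.dist_eq] at this
  norm_num at this
  linarith

/-- Mean inequality: `2 ≤ a + b → 2 ≤ a^p + b^p` in `ℝ≥0∞` for `1 ≤ p`. -/
lemma two_le_rpow_add_rpow {a b : ℝ≥0∞} (h : 2 ≤ a + b) {p : ℝ} (hp : 1 ≤ p) :
    2 ≤ a ^ p + b ^ p := by
  have key := ENNReal.rpow_arith_mean_le_arith_mean2_rpow 2⁻¹ 2⁻¹ a b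
    (by rw [← two_mul]; simp [ENNReal.mul_inv_cancel]) hp
  have h1 : (1 : ℝ≥0∞) ≤ 2⁻¹ * a + 2⁻¹ * b := by
    rw [← mul_add]
    calc (1 : ℝ≥0∞) = 2⁻¹ * 2 := by simp [ENNReal.inv_mul_cancel]
    _ ≤ 2⁻¹ * (a + b) := by gcongr
  have h2 : (1 : ℝ≥0∞) ≤ 2⁻¹ * a ^ p + 2⁻¹ * b ^ p := by
    calc (1 : ℝ≥0∞) = 1 ^ p := (ENNReal.one_rpow p).symm
    _ ≤ (2⁻¹ * a + 2⁻¹ * b) ^ p := ENNReal.rpow_le_rpow h1 (by linarith)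
    _ ≤ _ := key
  calc (2 : ℝ≥0∞) = 2 * 1 := (mul_one 2).symm
  _ ≤ 2 * (2⁻¹ * a ^ p + 2⁻¹ * b ^ p) := by gcongr
  _ = a ^ p + b ^ p := by
      rw [mul_add, ← mul_assoc, ← mul_assoc, ENNReal.mul_inv_cancel two_ne_zero ENNReal.ofNat_ne_top,
        one_mul, one_mul]

section MeasureHelpers
variable {α : Type*} [MeasurableSpace α] [MeasurableSingletonClass α]

lemma map_fst_eq_zero {q q' : Measure (α × α)} (h : (q + q').map Prod.fst = 0) :
    q = 0 ∧ q' = 0 := by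
  have h0 : (q + q') Set.univ = 0 := by
    have := congrArg (fun m : Measure α => m Set.univ) h
    rwa [Measure.map_apply measurable_fst MeasurableSet.univ, Set.preimage_univ,
      Measure.coe_zero, Pi.zero_apply] at this
  rw [Measure.add_apply, add_eq_zero] at h0
  exact ⟨Measure.measure_univ_eq_zero.mp h0.1, Measure.measure_univ_eq_zero.mp h0.2⟩

lemma map_snd_eq_zero {q q' : Measure (α × α)} (h : (q + q').map Prod.snd = 0) :
    q = 0 ∧ q' = 0 := by
  have h0 : (q + q') Set.univ = 0 := by
    have := congrArg (fun m : Measure α => m Set.univ) h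
    rwa [Measure.map_apply measurable_snd MeasurableSet.univ, Set.preimage_univ,
      Measure.coe_zero, Pi.zero_apply] at this
  rw [Measure.add_apply, add_eq_zero] at h0
  exact ⟨Measure.measure_univ_eq_zero.mp h0.1, Measure.measure_univ_eq_zero.mp h0.2⟩

lemma ae_fst_eq_of_map_add {q q' : Measure (α × α)} {a : α}
    (h : (q + q').map Prod.fst = Measure.dirac a) :
    (∀ᵐ z ∂q, z.1 = a) ∧ (∀ᵐ z ∂q', z.1 = a) := by
  have hs : MeasurableSet ({a}ᶜ : Set α) := (measurableSet_singleton a).compl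
  have h0 : (q + q') (Prod.fst ⁻¹' {a}ᶜ) = 0 := by
    have := congrArg (fun m : Measure α => m ({a}ᶜ : Set α)) h
    rw [Measure.map_apply measurable_fst hs] at this
    simpa [Measure.dirac_apply' _ hs] using this
  rw [Measure.add_apply, add_eq_zero] at h0
  constructor <;> rw [MeasureTheory.ae_iff] <;>
    [ (convert h0.1 using 2); (convert h0.2 using 2) ] <;>
    · ext z; simp [Set.mem_preimage]

lemma ae_snd_eq_of_map_add {q q' : Measure (α × α)} {a : α}
    (h : (q + q').map Prod.snd = Measure.dirac a) :
    (∀ᵐ z ∂q, z.2 = a) ∧ (∀ᵐ z ∂q', z.2 = a) := by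
  have hs : MeasurableSet ({a}ᶜ : Set α) := (measurableSet_singleton a).compl
  have h0 : (q + q') (Prod.snd ⁻¹' {a}ᶜ) = 0 := by
    have := congrArg (fun m : Measure α => m ({a}ᶜ : Set α)) h
    rw [Measure.map_apply measurable_snd hs] at this
    simpa [Measure.dirac_apply' _ hs] using this
  rw [Measure.add_apply, add_eq_zero] at h0
  constructor <;> rw [MeasureTheory.ae_iff] <;>
    [ (convert h0.1 using 2); (convert h0.2 using 2) ] <;>
    · ext z; simp [Set.mem_preimage]

end MeasureHelpers

/-- tcost of a scaled dirac. -/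
lemma tcost_smul_dirac (c : ℝ → ℝ → ℝ) (p : ℝ) (k : ℝ≥0∞) (a b : ℝ) :
    tcost c p (k • Measure.dirac (a, b)) = k * ENNReal.ofReal (c a b ^ p) := by
  rw [tcost, lintegral_smul_measure, lintegral_dirac, smul_eq_mul]

lemma tcost_zero (c : ℝ → ℝ → ℝ) (p : ℝ) : tcost c p (0 : Measure (ℝ × ℝ)) = 0 :=
  lintegral_zero_measure _

lemma rpow_one_div_le_one {S : ℝ≥0∞} (h : S ≤ 1) {p : ℝ} (hp : 1 ≤ p) :
    S ^ (1 / p) ≤ 1 := by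
  calc S ^ (1/p) ≤ 1 ^ (1/p) := ENNReal.rpow_le_rpow h (by positivity)
  _ = 1 := ENNReal.one_rpow _

lemma one_le_rpow_one_div {S : ℝ≥0∞} (h : 1 ≤ S) {p : ℝ} (hp : 1 ≤ p) :
    1 ≤ S ^ (1 / p) := by
  calc (1 : ℝ≥0∞) = 1 ^ (1/p) := (ENNReal.one_rpow _).symm
  _ ≤ S ^ (1/p) := ENNReal.rpow_le_rpow h (by positivity)

lemma ofReal_rpow_one_div {c : ℝ} (hc : 0 ≤ c) {p : ℝ} (hp : 1 ≤ p) :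
    (ENNReal.ofReal (c ^ p)) ^ (1 / p) = ENNReal.ofReal c := by
  have hp0 : (0:ℝ) < p := by linarith
  rw [ENNReal.ofReal_rpow_of_nonneg (Real.rpow_nonneg hc p) (by positivity : (0:ℝ) ≤ 1/p),
    ← Real.rpow_mul hc, mul_one_div_cancel (by linarith : p ≠ 0), Real.rpow_one]

lemma tcost_dirac (c : ℝ → ℝ → ℝ) (p : ℝ) (a b : ℝ) :
    tcost c p (Measure.dirac (a, b)) = ENNReal.ofReal (c a b ^ p) := by
  rw [tcost, lintegral_dirac]

lemma univ_eq_one_of_map_snd_dirac {q : Measure (ℝ × ℝ)} {a : ℝ}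
    (h : q.map Prod.snd = Measure.dirac a) : q Set.univ = 1 := by
  have := congrArg (fun m : Measure ℝ => m Set.univ) h
  rwa [Measure.map_apply measurable_snd MeasurableSet.univ, Set.preimage_univ,
    Measure.dirac_apply_of_mem (Set.mem_univ _)] at this

lemma Wtilde_dirac {p : ℝ} (hp : 1 ≤ p) :
    Wtilde Y3 p (Measure.dirac (-2 : ℝ) + 0, (0 : Measure ℝ))
      (Measure.dirac (2 : ℝ) + 0, (0 : Measure ℝ)) = 4 := by
  have hd : dist (-2 : ℝ) 2 = 4 := by rw [Real.dist_eq]; norm_num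
  have hS : (⨅ Q : {Q : Measure (ℝ × ℝ) × Measure (ℝ × ℝ) × Measure (ℝ × ℝ) × Measure (ℝ × ℝ) //
        (Q.1 + Q.2.1).map Prod.fst = Measure.dirac (-2 : ℝ) + 0 ∧
        (Q.2.2.1 + Q.2.2.2).map Prod.fst = (0 : Measure ℝ) ∧
        (Q.1 + Q.2.2.1).map Prod.snd = Measure.dirac (2 : ℝ) + 0 ∧
        (Q.2.1 + Q.2.2.2).map Prod.snd = (0 : Measure ℝ)},
      tcost (fun x y => dist x y) p Q.1.1 + tcost (dstar Y3) p Q.1.2.1 +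
        tcost (dstar Y3) p Q.1.2.2.1 + tcost (fun x y => dist x y) p Q.1.2.2.2) =
      ENNReal.ofReal (4 ^ p) := by
    apply le_antisymm
    · refine iInf_le_of_le ⟨(Measure.dirac ((-2 : ℝ), (2 : ℝ)), 0, 0, 0), ?_, ?_, ?_, ?_⟩ ?_
      · simp [Measure.map_dirac' measurable_fst]
      · simp
      · simp [Measure.map_dirac' measurable_snd]
      · simp
      · rw [tcost_dirac]
        simp only [tcost_zero, add_zero]
        rw [hd]
    · refine le_iInf fun Q => ?_
      obtain ⟨⟨q1, q2, q3, q4⟩, c1, c2, c3, c4⟩ := Q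
      dsimp only at c1 c2 c3 c4 ⊢
      obtain ⟨hq3, hq4⟩ := map_fst_eq_zero c2
      rw [hq4, add_zero] at c4
      have hq2 : q2 = 0 := (map_snd_eq_zero (q' := 0) (by rwa [add_zero])).1
      rw [hq2, add_zero] at c1
      rw [hq3, add_zero] at c3
      rw [add_zero] at c1 c3
      have ae1 : ∀ᵐ z ∂q1, z.1 = -2 :=
        (ae_fst_eq_of_map_add (q' := 0) (by rwa [add_zero])).1
      have ae2 : ∀ᵐ z ∂q1, z.2 = 2 :=
        (ae_snd_eq_of_map_add (q' := 0) (by rwa [add_zero])).1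
      have hmass : q1 Set.univ = 1 := univ_eq_one_of_map_snd_dirac c3
      have ht : tcost (fun x y => dist x y) p q1 = ENNReal.ofReal (4 ^ p) := by
        rw [tcost]
        have : ∫⁻ z, ENNReal.ofReal (dist z.1 z.2 ^ p) ∂q1 =
            ∫⁻ _, ENNReal.ofReal (4 ^ p) ∂q1 := by
          apply lintegral_congr_ae
          filter_upwards [ae1, ae2] with z h1 h2
          rw [h1, h2, hd]
        rw [this, lintegral_const, hmass, mul_one]
      rw [hq2, hq3, hq4, ht]
      simp [tcost_zero]
  rw [Wtilde]
  dsimp only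
  rw [hS, ofReal_rpow_one_div (by norm_num) hp]
  norm_num

lemma W0_diracs {p : ℝ} (hp : 1 ≤ p) :
    W0 Y3 p (Measure.dirac (-2 : ℝ)) (Measure.dirac (2 : ℝ)) = 4 := by
  rw [W0]
  apply le_antisymm
  · refine iInf_le_of_le ⟨((0 : Measure ℝ), (0 : Measure ℝ)), ?_, ?_⟩ ?_
    · simp [Measure.dirac_apply_of_mem (Set.mem_univ _)]
    · simp [Measure.dirac_apply_of_mem (Set.mem_univ _)]
    · exact le_of_eq (Wtilde_dirac hp)
  · refine le_iInf fun re => ?_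
    obtain ⟨⟨ρ, η⟩, c1, c2⟩ := re
    dsimp only at c1 c2 ⊢
    have key : ∀ (m : Measure ℝ) (a : ℝ),
        (Measure.dirac a + (2 : ℝ≥0∞) • m) Set.univ = 1 → m = 0 := by
      intro m a hc
      rw [Measure.add_apply, Measure.smul_apply, smul_eq_mul,
        Measure.dirac_apply_of_mem (Set.mem_univ _)] at hc
      have h0 : (2 : ℝ≥0∞) * m Set.univ = 0 := by
        exact (ENNReal.add_right_inj ENNReal.one_ne_top).mp (hc.trans (add_zero 1).symm)
      rcases mul_eq_zero.mp h0 with h | h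
      · exact absurd h (by norm_num)
      · exact Measure.measure_univ_eq_zero.mp h
    rw [key ρ _ c1, key η _ c2]
    exact ge_of_eq (Wtilde_dirac hp)

lemma meas_g1 (a : ℝ) {p : ℝ} (hp : 0 ≤ p) :
    Measurable (fun y : ℝ => ENNReal.ofReal (dist a y ^ p)) :=
  (((Real.continuous_rpow_const hp).comp
    (continuous_const.dist continuous_id)).measurable).ennreal_ofReal

lemma meas_g1' (a : ℝ) {p : ℝ} (hp : 0 ≤ p) :
    Measurable (fun x : ℝ => ENNReal.ofReal (dist x a ^ p)) :=
  (((Real.continuous_rpow_const hp).comp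
    (continuous_id.dist continuous_const)).measurable).ennreal_ofReal

lemma meas_g2 {p : ℝ} (hp : 0 ≤ p) :
    Measurable (fun y : ℝ => ENNReal.ofReal (dstar Y3 (-2) y ^ p)) :=
  (((Real.continuous_rpow_const hp).comp
    (dstar_lipschitz_right (-2)).continuous).measurable).ennreal_ofReal

lemma meas_g2' {p : ℝ} (hp : 0 ≤ p) :
    Measurable (fun x : ℝ => ENNReal.ofReal (dstar Y3 x 2 ^ p)) :=
  (((Real.continuous_rpow_const hp).comp
    (dstar_lipschitz_left 2).continuous).measurable).ennreal_ofReal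

lemma pt_bound {p : ℝ} (hp : 1 ≤ p) {d ds : ℝ} (hd : 0 ≤ d) (hds : 0 ≤ ds)
    (h : 2 ≤ d + ds) :
    2 ≤ ENNReal.ofReal (d ^ p) + ENNReal.ofReal (ds ^ p) := by
  rw [← ENNReal.ofReal_rpow_of_nonneg hd (by linarith),
    ← ENNReal.ofReal_rpow_of_nonneg hds (by linarith)]
  apply two_le_rpow_add_rpow ?_ hp
  rw [← ENNReal.ofReal_add hd hds]
  calc (2 : ℝ≥0∞) = ENNReal.ofReal 2 := by norm_num
  _ ≤ _ := ENNReal.ofReal_le_ofReal h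

lemma Wtilde_left_ge {p : ℝ} (hp : 1 ≤ p) {η : Measure ℝ} (hη : η Set.univ = 2⁻¹) :
    1 ≤ Wtilde Y3 p (Measure.dirac (-2 : ℝ) + 0, (0 : Measure ℝ)) ((0 : Measure ℝ) + η, η) := by
  rw [Wtilde]
  dsimp only
  apply one_le_rpow_one_div ?_ hp
  refine le_iInf fun Q => ?_
  obtain ⟨⟨q1, q2, q3, q4⟩, c1, c2, c3, c4⟩ := Q
  dsimp only at c1 c2 c3 c4 ⊢
  obtain ⟨hq3, hq4⟩ := map_fst_eq_zero c2
  rw [hq3] at c3; rw [hq4] at c4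
  rw [add_zero] at c1 c3 c4
  rw [zero_add] at c3
  obtain ⟨ae1, ae2⟩ := ae_fst_eq_of_map_add c1
  have ht1 : tcost (fun x y => dist x y) p q1 =
      ∫⁻ y, ENNReal.ofReal (dist (-2 : ℝ) y ^ p) ∂η := by
    rw [tcost, ← c3, lintegral_map (meas_g1 (-2) (by linarith : (0:ℝ) ≤ p)) measurable_snd]
    apply lintegral_congr_ae
    filter_upwards [ae1] with z h1
    rw [h1]
  have ht2 : tcost (dstar Y3) p q2 =
      ∫⁻ y, ENNReal.ofReal (dstar Y3 (-2) y ^ p) ∂η := by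
    rw [tcost, ← c4, lintegral_map (meas_g2 (by linarith : (0:ℝ) ≤ p)) measurable_snd]
    apply lintegral_congr_ae
    filter_upwards [ae2] with z h1
    rw [h1]
  rw [ht1, ht2, hq3, hq4, tcost_zero, tcost_zero, add_zero, add_zero,
    ← lintegral_add_left (meas_g1 (-2) (by linarith : (0:ℝ) ≤ p))]
  calc (1 : ℝ≥0∞) = 2 * η Set.univ := by
        rw [hη, ENNReal.mul_inv_cancel two_ne_zero ENNReal.ofNat_ne_top]
  _ = ∫⁻ _, (2 : ℝ≥0∞) ∂η := by rw [lintegral_const]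
  _ ≤ _ := by
      apply lintegral_mono
      intro y
      exact pt_bound hp dist_nonneg (dstar_nonneg _ _) (two_le_dist_add_dstar_left (Or.inl rfl) y)

lemma Wtilde_right_ge {p : ℝ} (hp : 1 ≤ p) {ρ : Measure ℝ} (hρ : ρ Set.univ = 2⁻¹) :
    1 ≤ Wtilde Y3 p ((0 : Measure ℝ) + ρ, ρ) (Measure.dirac (2 : ℝ) + 0, (0 : Measure ℝ)) := by
  rw [Wtilde]
  dsimp only
  apply one_le_rpow_one_div ?_ hp
  refine le_iInf fun Q => ?_
  obtain ⟨⟨q1, q2, q3, q4⟩, c1, c2, c3, c4⟩ := Q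
  dsimp only at c1 c2 c3 c4 ⊢
  obtain ⟨hq2, hq4⟩ := map_snd_eq_zero c4
  rw [hq2] at c1; rw [hq4] at c2
  simp only [add_zero, zero_add] at c1 c2 c3
  obtain ⟨ae1, ae3⟩ := ae_snd_eq_of_map_add c3
  have ht1 : tcost (fun x y => dist x y) p q1 =
      ∫⁻ x, ENNReal.ofReal (dist x (2 : ℝ) ^ p) ∂ρ := by
    rw [tcost, ← c1, lintegral_map (meas_g1' 2 (by linarith : (0:ℝ) ≤ p)) measurable_fst]
    apply lintegral_congr_ae
    filter_upwards [ae1] with z h1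
    rw [h1]
  have ht3 : tcost (dstar Y3) p q3 =
      ∫⁻ x, ENNReal.ofReal (dstar Y3 x 2 ^ p) ∂ρ := by
    rw [tcost, ← c2, lintegral_map (meas_g2' (by linarith : (0:ℝ) ≤ p)) measurable_fst]
    apply lintegral_congr_ae
    filter_upwards [ae3] with z h1
    rw [h1]
  rw [ht1, ht3, hq2, hq4, tcost_zero, tcost_zero, add_zero, add_zero,
    ← lintegral_add_left (meas_g1' 2 (by linarith : (0:ℝ) ≤ p))]
  calc (1 : ℝ≥0∞) = 2 * ρ Set.univ := by
        rw [hρ, ENNReal.mul_inv_cancel two_ne_zero ENNReal.ofNat_ne_top]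
  _ = ∫⁻ _, (2 : ℝ≥0∞) ∂ρ := by rw [lintegral_const]
  _ ≤ _ := by
      apply lintegral_mono
      intro x
      exact pt_bound hp dist_nonneg (dstar_nonneg _ _)
        (two_le_dist_add_dstar_right (Or.inr rfl) x)

lemma half_add_half (m : Measure (ℝ × ℝ)) :
    (2⁻¹ : ℝ≥0∞) • m + (2⁻¹ : ℝ≥0∞) • m = m := by
  rw [← add_smul, ENNReal.inv_two_add_inv_two, one_smul]

lemma Wtilde_left_le {p : ℝ} (hp : 1 ≤ p) :
    Wtilde Y3 p (Measure.dirac (-2 : ℝ) + 0, (0 : Measure ℝ))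
      ((0 : Measure ℝ) + (2⁻¹ : ℝ≥0∞) • Measure.dirac (-3 : ℝ),
        (2⁻¹ : ℝ≥0∞) • Measure.dirac (-3 : ℝ)) ≤ 1 := by
  rw [Wtilde]
  dsimp only
  apply rpow_one_div_le_one ?_ hp
  refine iInf_le_of_le ⟨((2⁻¹ : ℝ≥0∞) • Measure.dirac ((-2 : ℝ), (-3 : ℝ)),
    (2⁻¹ : ℝ≥0∞) • Measure.dirac ((-2 : ℝ), (-3 : ℝ)), 0, 0), ?_, ?_, ?_, ?_⟩ ?_
  · rw [half_add_half, add_zero, Measure.map_dirac' measurable_fst]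
  · simp
  · rw [add_zero, Measure.map_smul, Measure.map_dirac' measurable_snd, zero_add]
  · rw [add_zero, Measure.map_smul, Measure.map_dirac' measurable_snd]
  · dsimp only
    simp only [tcost_smul_dirac, tcost_zero, add_zero]
    have hd : dist (-2 : ℝ) (-3 : ℝ) = 1 := by rw [Real.dist_eq]; norm_num
    have h1 : ENNReal.ofReal (dist (-2 : ℝ) (-3 : ℝ) ^ p) ≤ 1 := by
      rw [hd, Real.one_rpow]; simp
    have h2 : ENNReal.ofReal (dstar Y3 (-2) (-3) ^ p) ≤ 1 := by
      rw [← ENNReal.ofReal_one]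
      exact ENNReal.ofReal_le_ofReal
        (Real.rpow_le_one (dstar_nonneg _ _) dstar_m2_m3 (by linarith))
    calc 2⁻¹ * ENNReal.ofReal (dist (-2 : ℝ) (-3 : ℝ) ^ p) +
          2⁻¹ * ENNReal.ofReal (dstar Y3 (-2) (-3) ^ p) ≤ 2⁻¹ * 1 + 2⁻¹ * 1 := by gcongr
    _ = 1 := by rw [mul_one, ENNReal.inv_two_add_inv_two]

lemma Wtilde_right_le {p : ℝ} (hp : 1 ≤ p) :
    Wtilde Y3 p ((0 : Measure ℝ) + (2⁻¹ : ℝ≥0∞) • Measure.dirac (3 : ℝ),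
        (2⁻¹ : ℝ≥0∞) • Measure.dirac (3 : ℝ))
      (Measure.dirac (2 : ℝ) + 0, (0 : Measure ℝ)) ≤ 1 := by
  rw [Wtilde]
  dsimp only
  apply rpow_one_div_le_one ?_ hp
  refine iInf_le_of_le ⟨((2⁻¹ : ℝ≥0∞) • Measure.dirac ((3 : ℝ), (2 : ℝ)), 0,
    (2⁻¹ : ℝ≥0∞) • Measure.dirac ((3 : ℝ), (2 : ℝ)), 0), ?_, ?_, ?_, ?_⟩ ?_
  · rw [add_zero, Measure.map_smul, Measure.map_dirac' measurable_fst, zero_add]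
  · rw [add_zero, Measure.map_smul, Measure.map_dirac' measurable_fst]
  · rw [half_add_half, add_zero, Measure.map_dirac' measurable_snd]
  · simp
  · dsimp only
    simp only [tcost_smul_dirac, tcost_zero, add_zero, zero_add]
    have hd : dist (3 : ℝ) (2 : ℝ) = 1 := by rw [Real.dist_eq]; norm_num
    have h1 : ENNReal.ofReal (dist (3 : ℝ) (2 : ℝ) ^ p) ≤ 1 := by
      rw [hd, Real.one_rpow]; simp
    have h2 : ENNReal.ofReal (dstar Y3 3 2 ^ p) ≤ 1 := by
      rw [← ENNReal.ofReal_one]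
      exact ENNReal.ofReal_le_ofReal
        (Real.rpow_le_one (dstar_nonneg _ _) dstar_3_2 (by linarith))
    calc 2⁻¹ * ENNReal.ofReal (dist (3 : ℝ) (2 : ℝ) ^ p) +
          2⁻¹ * ENNReal.ofReal (dstar Y3 3 2 ^ p) ≤ 2⁻¹ * 1 + 2⁻¹ * 1 := by gcongr
    _ = 1 := by rw [mul_one, ENNReal.inv_two_add_inv_two]

lemma W0_left {p : ℝ} (hp : 1 ≤ p) :
    W0 Y3 p (Measure.dirac (-2 : ℝ)) (0 : Measure ℝ) = 1 := by
  rw [W0]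
  apply le_antisymm
  · refine iInf_le_of_le ⟨((0 : Measure ℝ), (2⁻¹ : ℝ≥0∞) • Measure.dirac (-3 : ℝ)), ?_, ?_⟩ ?_
    · simp [Measure.dirac_apply_of_mem (Set.mem_univ _)]
    · rw [Measure.add_apply, Measure.coe_zero, Pi.zero_apply, zero_add, smul_smul,
        ENNReal.mul_inv_cancel two_ne_zero ENNReal.ofNat_ne_top, one_smul,
        Measure.dirac_apply_of_mem (Set.mem_univ _)]
    · exact Wtilde_left_le hp
  · refine le_iInf fun re => ?_
    obtain ⟨⟨ρ, η⟩, c1, c2⟩ := re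
    dsimp only at c1 c2 ⊢
    have hρ : ρ = 0 := by
      rw [Measure.add_apply, Measure.smul_apply, smul_eq_mul,
        Measure.dirac_apply_of_mem (Set.mem_univ _)] at c1
      have h0 := (ENNReal.add_right_inj ENNReal.one_ne_top).mp (c1.trans (add_zero 1).symm)
      rcases mul_eq_zero.mp h0 with h | h
      · exact absurd h (by norm_num)
      · exact Measure.measure_univ_eq_zero.mp h
    have hη : η Set.univ = 2⁻¹ := by
      rw [Measure.add_apply, Measure.coe_zero, Pi.zero_apply, zero_add,
        Measure.smul_apply, smul_eq_mul] at c2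
      rw [← one_mul (η Set.univ), ← ENNReal.inv_mul_cancel (two_ne_zero) ENNReal.ofNat_ne_top,
        mul_assoc, c2, mul_one]
    rw [hρ]
    exact Wtilde_left_ge hp hη

lemma W0_right {p : ℝ} (hp : 1 ≤ p) :
    W0 Y3 p (0 : Measure ℝ) (Measure.dirac (2 : ℝ)) = 1 := by
  rw [W0]
  apply le_antisymm
  · refine iInf_le_of_le ⟨(((2⁻¹ : ℝ≥0∞) • Measure.dirac (3 : ℝ)), (0 : Measure ℝ)), ?_, ?_⟩ ?_
    · rw [Measure.add_apply, Measure.coe_zero, Pi.zero_apply, zero_add, smul_smul,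
        ENNReal.mul_inv_cancel two_ne_zero ENNReal.ofNat_ne_top, one_smul,
        Measure.dirac_apply_of_mem (Set.mem_univ _)]
    · simp [Measure.dirac_apply_of_mem (Set.mem_univ _)]
    · exact Wtilde_right_le hp
  · refine le_iInf fun re => ?_
    obtain ⟨⟨ρ, η⟩, c1, c2⟩ := re
    dsimp only at c1 c2 ⊢
    have hη : η = 0 := by
      rw [Measure.add_apply, Measure.smul_apply, smul_eq_mul,
        Measure.dirac_apply_of_mem (Set.mem_univ _)] at c2
      have h0 := (ENNReal.add_right_inj ENNReal.one_ne_top).mp (c2.trans (add_zero 1).symm)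
      rcases mul_eq_zero.mp h0 with h | h
      · exact absurd h (by norm_num)
      · exact Measure.measure_univ_eq_zero.mp h
    have hρ : ρ Set.univ = 2⁻¹ := by
      rw [Measure.add_apply, Measure.coe_zero, Pi.zero_apply, zero_add,
        Measure.smul_apply, smul_eq_mul] at c1
      rw [← one_mul (ρ Set.univ), ← ENNReal.inv_mul_cancel (two_ne_zero) ENNReal.ofNat_ne_top,
        mul_assoc, c1, mul_one]
    rw [hη]
    exact Wtilde_right_ge hp hρ


/-- in `X = ℝ`, `Y = (-3,3)`, with `μ = δ_{-2}`, `ν = δ_2`, `ξ = 0`,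
the pre-distance `W⁰_p` fails the triangle inequality: `W⁰_p(μ,ν) = 4` while
`W⁰_p(μ,ξ) + W⁰_p(ξ,ν) = 2`. -/
theorem W0_no_triangle (p : ℝ) (hp : 1 ≤ p) :
    W0 (Set.Ioo (-3 : ℝ) 3) p (Measure.dirac (-2)) (Measure.dirac 2) = 4 ∧
    W0 (Set.Ioo (-3 : ℝ) 3) p (Measure.dirac (-2)) 0 +
      W0 (Set.Ioo (-3 : ℝ) 3) p 0 (Measure.dirac 2) = 2 := by
  refine ⟨W0_diracs hp, ?_⟩
  rw [W0_left hp, W0_right hp]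
  norm_num
end

section
/- Let X = ℝ, Y = (0,2), and μ = (1/2)(δ_1 + δ_ε) for ε ∈ (0,1). Then W'_p(μ,0)^p = (1/2)(1+ε^p) and W*_p(μ)^p = ((1+ε)/2)^p; in particular, as ε → 0, the ratio W*_p(μ)/W'_p(μ,0) tends to 2^{-1+1/p}, showing the lower bound 2^{-1+1/p} W'_p(μ,0) ≤ W*_p(μ) is sharp. -/
open MeasureTheory Metric Set
open scoped ENNReal NNReal

/-- `W'_p(μ,0)^p = ∫ d'(x,∂)^p dμ`: the `p`-th power of the cost of annihilating `μ`
at the boundary via the shortcut metric. -/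
noncomputable def WprimeZeroPow {X : Type*} [MetricSpace X] [MeasurableSpace X]
    (Y : Set X) (p : ℝ) (μ : Measure X) : ℝ≥0∞ :=
  ∫⁻ x, ENNReal.ofReal (infDist x Yᶜ ^ p) ∂μ

/-- `W_p(μ,ν)^p`: the `p`-th power of the Kantorovich-Wasserstein distance. -/
noncomputable def WpPow {X : Type*} [MetricSpace X] [MeasurableSpace X] (p : ℝ)
    (μ ν : Measure X) : ℝ≥0∞ :=
  ⨅ q : Cpl μ ν, tcost (fun a b => dist a b) p q.1

/-- `W*_p(μ,ν)^p`: the `p`-th power of the transportation cost w.r.t. the meta-metric `d*`. -/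
noncomputable def WstarPow {X : Type*} [MetricSpace X] [MeasurableSpace X] (Y : Set X) (p : ℝ)
    (μ ν : Measure X) : ℝ≥0∞ :=
  ⨅ q : Cpl μ ν, tcost (dstar Y) p q.1

/-- The annihilation cost `W*_p(μ) := (1/2) W*_p(μ,μ)`. -/
noncomputable def Wstar {X : Type*} [MetricSpace X] [MeasurableSpace X] (Y : Set X) (p : ℝ)
    (μ : Measure X) : ℝ≥0∞ :=
  2⁻¹ * (WstarPow Y p μ μ) ^ (1/p)

/-- Approximate midpoint property: a characterization of length spaces. -/
def IsLengthDist {α : Type*} (d : α → α → ℝ) : Prop :=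
  ∀ x y : α, ∀ ε > (0:ℝ), ∃ z : α, d x z ≤ d x y / 2 + ε ∧ d z y ≤ d x y / 2 + ε


lemma infDist_compl_Ioo {x : ℝ} (hx0 : 0 ≤ x) (hx2 : x ≤ 2) :
    infDist x (Ioo (0:ℝ) 2)ᶜ = min x (2 - x) := by
  have hne : ((Ioo (0:ℝ) 2)ᶜ).Nonempty := ⟨0, by simp⟩
  refine le_antisymm (le_min ?_ ?_) ?_
  · have := infDist_le_dist_of_mem (x := x) (y := (0:ℝ)) (s := (Ioo (0:ℝ) 2)ᶜ) (by simp)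
    rwa [Real.dist_eq, sub_zero, abs_of_nonneg hx0] at this
  · have := infDist_le_dist_of_mem (x := x) (y := (2:ℝ)) (s := (Ioo (0:ℝ) 2)ᶜ) (by simp)
    rwa [Real.dist_eq, abs_of_nonpos (by linarith), neg_sub] at this
  · by_contra h
    push_neg at h
    obtain ⟨y, hy, hlt⟩ := (infDist_lt_iff hne).1 h
    rw [Real.dist_eq] at hlt
    simp only [mem_compl_iff, mem_Ioo, not_and, not_lt] at hy
    rcases le_or_gt y 0 with h0 | h0
    · have : x - y ≤ |x - y| := le_abs_self _
      have := min_le_left x (2 - x)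
      linarith
    · have h2 : 2 ≤ y := hy h0
      have : -(x - y) ≤ |x - y| := neg_le_abs _
      have := min_le_right x (2 - x)
      linarith

lemma dstar_Ioo {x y : ℝ} (hx : x ∈ Icc (0:ℝ) 2) (hy : y ∈ Icc (0:ℝ) 2) :
    dstar (Ioo (0:ℝ) 2) x y = min (x + y) (4 - x - y) := by
  obtain ⟨hx0, hx2⟩ := hx
  obtain ⟨hy0, hy2⟩ := hy
  haveI : Nonempty ((Ioo (0:ℝ) 2)ᶜ : Set ℝ) := ⟨⟨0, by simp⟩⟩
  have hbdd : BddBelow (Set.range fun z : ((Ioo (0:ℝ) 2)ᶜ : Set ℝ) =>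
      dist x (z : ℝ) + dist (z : ℝ) y) := by
    refine ⟨0, ?_⟩
    rintro _ ⟨z, rfl⟩
    positivity
  rw [dstar]
  refine le_antisymm (le_min ?_ ?_) ?_
  · have h := ciInf_le hbdd (⟨(0:ℝ), by simp⟩ : ((Ioo (0:ℝ) 2)ᶜ : Set ℝ))
    have e1 : dist x (0:ℝ) = x := by rw [Real.dist_eq, sub_zero, abs_of_nonneg hx0]
    have e2 : dist (0:ℝ) y = y := by rw [Real.dist_eq, zero_sub, abs_neg, abs_of_nonneg hy0]
    calc (⨅ z : ((Ioo (0:ℝ) 2)ᶜ : Set ℝ), (dist x (z:ℝ) + dist (z:ℝ) y))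
        ≤ dist x (0:ℝ) + dist (0:ℝ) y := h
      _ = x + y := by rw [e1, e2]
  · have h := ciInf_le hbdd (⟨(2:ℝ), by simp⟩ : ((Ioo (0:ℝ) 2)ᶜ : Set ℝ))
    have e1 : dist x (2:ℝ) = 2 - x := by
      rw [Real.dist_eq, abs_of_nonpos (by linarith)]; ring
    have e2 : dist (2:ℝ) y = 2 - y := by
      rw [Real.dist_eq, abs_of_nonneg (by linarith)]
    calc (⨅ z : ((Ioo (0:ℝ) 2)ᶜ : Set ℝ), (dist x (z:ℝ) + dist (z:ℝ) y))
        ≤ dist x (2:ℝ) + dist (2:ℝ) y := h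
      _ = 4 - x - y := by rw [e1, e2]; ring
  · refine le_ciInf fun z => ?_
    obtain ⟨z, hz⟩ := z
    simp only [mem_compl_iff, mem_Ioo, not_and, not_lt] at hz
    simp only [Real.dist_eq]
    rcases le_or_gt z 0 with h0 | h0
    · have h1 : x - z ≤ |x - z| := le_abs_self _
      have h2 : y - z ≤ |z - y| := by rw [abs_sub_comm]; exact le_abs_self _
      have := min_le_left (x + y) (4 - x - y)
      linarith
    · have h2 : 2 ≤ z := hz h0
      have h1 : z - x ≤ |x - z| := by rw [abs_sub_comm]; exact le_abs_self _
      have h3 : z - y ≤ |z - y| := le_abs_self _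
      have := min_le_right (x + y) (4 - x - y)
      linarith

lemma two_inv_eq : (2:ℝ≥0∞)⁻¹ = ENNReal.ofReal (1/2) := by
  rw [one_div, ENNReal.ofReal_inv_of_pos (by norm_num)]
  norm_num

lemma real_conv {p a b : ℝ} (hp : 1 ≤ p) (ha : 0 ≤ a) (hb : 0 ≤ b) :
    (a + b) ^ p ≤ 2 ^ (p - 1) * (a ^ p + b ^ p) := by
  have h := NNReal.rpow_add_le_mul_rpow_add_rpow a.toNNReal b.toNNReal hp
  have := NNReal.coe_le_coe.2 h
  push_cast [Real.coe_toNNReal a ha, Real.coe_toNNReal b hb] at this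
  convert this using 2

lemma Wprime_eval {p ε : ℝ} (hp : 1 ≤ p) (hε : ε ∈ Ioo (0:ℝ) 1) :
    WprimeZeroPow (Set.Ioo (0:ℝ) 2) p
        ((2:ℝ≥0∞)⁻¹ • (Measure.dirac (1:ℝ) + Measure.dirac ε)) =
      ENNReal.ofReal ((1/2) * (1 + ε ^ p)) := by
  obtain ⟨hε0, hε1⟩ := hε
  have h1 : infDist (1:ℝ) (Ioo (0:ℝ) 2)ᶜ = 1 := by
    rw [infDist_compl_Ioo (by norm_num) (by norm_num)]; norm_num
  have h2 : infDist ε (Ioo (0:ℝ) 2)ᶜ = ε := by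
    rw [infDist_compl_Ioo (le_of_lt hε0) (by linarith)]
    rw [min_eq_left (by linarith)]
  rw [WprimeZeroPow, lintegral_smul_measure, lintegral_add_measure,
    lintegral_dirac, lintegral_dirac, h1, h2, Real.one_rpow]
  have e : ENNReal.ofReal 1 + ENNReal.ofReal (ε ^ p) = ENNReal.ofReal (1 + ε ^ p) := by
    rw [ENNReal.ofReal_add (by norm_num) (Real.rpow_nonneg hε0.le p)]
  rw [e, two_inv_eq, smul_eq_mul, ← ENNReal.ofReal_mul (by norm_num)]

lemma WstarPow_eval {p ε : ℝ} (hp : 1 ≤ p) (hε0 : 0 < ε) (hε1 : ε < 1) :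
    WstarPow (Set.Ioo (0:ℝ) 2) p
        ((2:ℝ≥0∞)⁻¹ • (Measure.dirac (1:ℝ) + Measure.dirac ε))
        ((2:ℝ≥0∞)⁻¹ • (Measure.dirac (1:ℝ) + Measure.dirac ε)) =
      ENNReal.ofReal ((1 + ε) ^ p) := by
  set μ : Measure ℝ := (2:ℝ≥0∞)⁻¹ • (Measure.dirac (1:ℝ) + Measure.dirac ε) with hμdef
  have hd1ε : dstar (Ioo (0:ℝ) 2) 1 ε = 1 + ε := by
    rw [dstar_Ioo (by constructor <;> norm_num) ⟨hε0.le, by linarith⟩]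
    rw [min_eq_left (by linarith)]
  have hdε1 : dstar (Ioo (0:ℝ) 2) ε 1 = 1 + ε := by
    rw [dstar_Ioo ⟨hε0.le, by linarith⟩ (by constructor <;> norm_num)]
    rw [min_eq_left (by linarith)]; ring
  have hd11 : dstar (Ioo (0:ℝ) 2) 1 1 = 2 := by
    rw [dstar_Ioo (by constructor <;> norm_num) (by constructor <;> norm_num)]
    norm_num
  have hdεε : dstar (Ioo (0:ℝ) 2) ε ε = 2 * ε := by
    rw [dstar_Ioo ⟨hε0.le, by linarith⟩ ⟨hε0.le, by linarith⟩]
    rw [min_eq_left (by linarith)]; ring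
  have half_sum : ∀ x : ℝ≥0∞, (2:ℝ≥0∞)⁻¹ * (x + x) = x := by
    intro x
    rw [← two_mul, ← mul_assoc, ENNReal.inv_mul_cancel two_ne_zero ENNReal.ofNat_ne_top, one_mul]
  refine le_antisymm ?_ ?_
  · -- upper bound via the coupling (1/2)(δ_{(1,ε)} + δ_{(ε,1)})
    set q : Measure (ℝ × ℝ) :=
      (2:ℝ≥0∞)⁻¹ • (Measure.dirac ((1:ℝ), ε) + Measure.dirac (ε, (1:ℝ))) with hqdef
    have hq : q ∈ Cpl μ μ := by
      constructor
      · rw [hqdef, Measure.map_smul, Measure.map_add _ _ measurable_fst,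
          Measure.map_dirac' measurable_fst, Measure.map_dirac' measurable_fst]
      · rw [hqdef, Measure.map_smul, Measure.map_add _ _ measurable_snd,
          Measure.map_dirac' measurable_snd, Measure.map_dirac' measurable_snd, hμdef]
        rw [add_comm (Measure.dirac ε)]
    refine le_trans (iInf_le _ (⟨q, hq⟩ : Cpl μ μ)) ?_
    show (∫⁻ z : ℝ × ℝ, ENNReal.ofReal (dstar (Ioo (0:ℝ) 2) z.1 z.2 ^ p) ∂q) ≤ _
    rw [hqdef, lintegral_smul_measure, lintegral_add_measure,
      lintegral_dirac, lintegral_dirac]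
    simp only [hd1ε, hdε1]
    rw [smul_eq_mul, half_sum]
  · -- lower bound via dual potentials
    refine le_iInf ?_
    rintro ⟨q, hq1, hq2⟩
    set c1 : ℝ := (2 * ε) ^ p / 2 with hc1def
    set c2 : ℝ := (1 + ε) ^ p - c1 with hc2def
    have h2ε : (2 * ε) ^ p ≤ (1 + ε) ^ p :=
      Real.rpow_le_rpow (by positivity) (by linarith) (by linarith)
    have hc1 : 0 ≤ c1 := by positivity
    have hc2 : 0 ≤ c2 := by
      rw [hc2def, hc1def]
      nlinarith [Real.rpow_nonneg (show (0:ℝ) ≤ 2 * ε by positivity) p]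
    have hconv : 2 * (1 + ε) ^ p ≤ 2 ^ p + (2 * ε) ^ p := by
      have h := real_conv hp (show (0:ℝ) ≤ 1 by norm_num) hε0.le
      rw [Real.one_rpow] at h
      have h2 : (2:ℝ) ^ (p - 1) = 2 ^ p / 2 := by
        rw [Real.rpow_sub (by norm_num), Real.rpow_one]
      have h3 : (2 * ε) ^ p = 2 ^ p * ε ^ p := Real.mul_rpow (by norm_num) hε0.le
      nlinarith [Real.rpow_nonneg (show (0:ℝ) ≤ 2 by norm_num) p,
        Real.rpow_nonneg hε0.le p]
    set φ : ℝ → ℝ := fun x => if x = ε then c1 else c2 with hφdef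
    have hφm : Measurable fun x => ENNReal.ofReal (φ x) := by
      apply ENNReal.measurable_ofReal.comp
      exact Measurable.ite (measurableSet_eq) measurable_const measurable_const
    have hφ1 : φ 1 = c2 := by rw [hφdef]; simp [show (1:ℝ) ≠ ε by linarith]
    have hφε : φ ε = c1 := by rw [hφdef]; simp
    set S : Set ℝ := {1, ε} with hSdef
    have hSm : MeasurableSet S := (measurableSet_singleton ε).insert 1
    have hμS : μ Sᶜ = 0 := by
      rw [hμdef]
      simp [Measure.dirac_apply, hSdef]
    have hA : ∀ᵐ z ∂q, z.1 ∈ S := by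
      rw [ae_iff]
      have : {z : ℝ × ℝ | ¬ z.1 ∈ S} = Prod.fst ⁻¹' Sᶜ := rfl
      rw [this, ← Measure.map_apply measurable_fst hSm.compl, hq1, hμS]
    have hB : ∀ᵐ z ∂q, z.2 ∈ S := by
      rw [ae_iff]
      have : {z : ℝ × ℝ | ¬ z.2 ∈ S} = Prod.snd ⁻¹' Sᶜ := rfl
      rw [this, ← Measure.map_apply measurable_snd hSm.compl, hq2, hμS]
    have hpt : ∀ a ∈ S, ∀ b ∈ S,
        ENNReal.ofReal (φ a) + ENNReal.ofReal (φ b) ≤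
          ENNReal.ofReal (dstar (Ioo (0:ℝ) 2) a b ^ p) := by
      rintro a (rfl | rfl) b (rfl | rfl)
      · rw [hφ1, hd11, ← ENNReal.ofReal_add hc2 hc2]
        exact ENNReal.ofReal_le_ofReal (by rw [hc2def, hc1def]; linarith)
      · rw [hφ1, hφε, hd1ε, ← ENNReal.ofReal_add hc2 hc1]
        exact ENNReal.ofReal_le_ofReal (by rw [hc2def]; linarith)
      · rw [hφ1, hφε, hdε1, ← ENNReal.ofReal_add hc1 hc2]
        exact ENNReal.ofReal_le_ofReal (by rw [hc2def]; linarith)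
      · rw [hφε, hdεε, ← ENNReal.ofReal_add hc1 hc1]
        exact ENNReal.ofReal_le_ofReal (by rw [hc1def]; linarith)
    have step1 : ∫⁻ z, (ENNReal.ofReal (φ z.1) + ENNReal.ofReal (φ z.2)) ∂q ≤
        tcost (dstar (Ioo (0:ℝ) 2)) p q := by
      refine lintegral_mono_ae ?_
      filter_upwards [hA, hB] with z h1 h2
      exact hpt _ h1 _ h2
    have hφint : ∫⁻ x, ENNReal.ofReal (φ x) ∂μ = ENNReal.ofReal ((1 + ε) ^ p) / 2 := by
      rw [hμdef, lintegral_smul_measure, lintegral_add_measure, lintegral_dirac,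
        lintegral_dirac, hφ1, hφε, ← ENNReal.ofReal_add hc2 hc1]
      have : c2 + c1 = (1 + ε) ^ p := by rw [hc2def]; ring
      rw [this, ENNReal.div_eq_inv_mul, smul_eq_mul]
    have step2 : ∫⁻ z, (ENNReal.ofReal (φ z.1) + ENNReal.ofReal (φ z.2)) ∂q =
        ENNReal.ofReal ((1 + ε) ^ p) := by
      have hm1 : Measurable fun z : ℝ × ℝ => ENNReal.ofReal (φ z.1) :=
        hφm.comp measurable_fst
      rw [lintegral_add_left hm1]
      have e1 : ∫⁻ z, ENNReal.ofReal (φ z.1) ∂q = ∫⁻ x, ENNReal.ofReal (φ x) ∂μ := by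
        rw [← hq1, lintegral_map hφm measurable_fst]
      have e2 : ∫⁻ z, ENNReal.ofReal (φ z.2) ∂q = ∫⁻ x, ENNReal.ofReal (φ x) ∂μ := by
        rw [← hq2, lintegral_map hφm measurable_snd]
      rw [e1, e2, hφint, ENNReal.div_add_div_same, ENNReal.div_eq_inv_mul, half_sum]
    rw [← step2]
    exact step1

lemma Wstar_eval {p ε : ℝ} (hp : 1 ≤ p) (hε0 : 0 < ε) (hε1 : ε < 1) :
    Wstar (Set.Ioo (0:ℝ) 2) p
        ((2:ℝ≥0∞)⁻¹ • (Measure.dirac (1:ℝ) + Measure.dirac ε)) =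
      ENNReal.ofReal ((1 + ε) / 2) := by
  have hp0 : p ≠ 0 := by linarith
  rw [Wstar, WstarPow_eval hp hε0 hε1,
    ENNReal.ofReal_rpow_of_pos (by positivity : (0:ℝ) < (1 + ε) ^ p),
    ← Real.rpow_mul (by linarith : (0:ℝ) ≤ 1 + ε), mul_one_div, div_self hp0,
    Real.rpow_one, two_inv_eq, ← ENNReal.ofReal_mul (by norm_num)]
  congr 1
  ring

theorem Wstar_lower_bound_sharp' (p : ℝ) (hp : 1 ≤ p) :
    (∀ ε : ℝ, ε ∈ Set.Ioo (0:ℝ) 1 →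
      WprimeZeroPow (Set.Ioo (0:ℝ) 2) p
          ((2:ℝ≥0∞)⁻¹ • (Measure.dirac (1:ℝ) + Measure.dirac ε)) =
        ENNReal.ofReal ((1/2) * (1 + ε ^ p)) ∧
      (Wstar (Set.Ioo (0:ℝ) 2) p
          ((2:ℝ≥0∞)⁻¹ • (Measure.dirac (1:ℝ) + Measure.dirac ε))) ^ p =
        ENNReal.ofReal (((1 + ε)/2) ^ p)) ∧
    Filter.Tendsto
      (fun ε : ℝ =>
        Wstar (Set.Ioo (0:ℝ) 2) p ((2:ℝ≥0∞)⁻¹ • (Measure.dirac (1:ℝ) + Measure.dirac ε)) /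
          (WprimeZeroPow (Set.Ioo (0:ℝ) 2) p
            ((2:ℝ≥0∞)⁻¹ • (Measure.dirac (1:ℝ) + Measure.dirac ε))) ^ (1/p))
      (nhdsWithin 0 (Set.Ioi 0))
      (nhds (ENNReal.ofReal (2 ^ (-1 + 1/p : ℝ)))) := by
  have hp0 : (0:ℝ) < p := by linarith
  constructor
  · intro ε hε
    obtain ⟨hε0, hε1⟩ := hε
    refine ⟨Wprime_eval hp ⟨hε0, hε1⟩, ?_⟩
    rw [Wstar_eval hp hε0 hε1, ENNReal.ofReal_rpow_of_pos (by positivity)]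
  · -- the limit
    set f : ℝ → ℝ := fun ε => ((1 + ε) / 2) / ((1/2 * (1 + ε ^ p)) ^ (1/p)) with hfdef
    have hlim : Filter.Tendsto f (nhdsWithin 0 (Set.Ioi 0)) (nhds (2 ^ (-1 + 1/p : ℝ))) := by
      have t1 : Filter.Tendsto (fun ε : ℝ => ε ^ p) (nhdsWithin 0 (Set.Ioi 0)) (nhds 0) := by
        have h := (Real.continuousAt_rpow_const 0 p (Or.inr hp0.le)).tendsto
        rw [Real.zero_rpow (by linarith)] at h
        exact h.mono_left nhdsWithin_le_nhds
      have t2 : Filter.Tendsto (fun ε : ℝ => 1/2 * (1 + ε ^ p)) (nhdsWithin 0 (Set.Ioi 0))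
          (nhds (1/2)) := by
        have := ((t1.const_add 1).const_mul (1/2 : ℝ))
        simpa using this
      have t3 : Filter.Tendsto (fun ε : ℝ => (1/2 * (1 + ε ^ p)) ^ (1/p))
          (nhdsWithin 0 (Set.Ioi 0)) (nhds ((1/2 : ℝ) ^ (1/p))) :=
        ((Real.continuousAt_rpow_const (1/2) (1/p) (Or.inl (by norm_num))).tendsto).comp t2
      have t4 : Filter.Tendsto (fun ε : ℝ => (1 + ε) / 2) (nhdsWithin 0 (Set.Ioi 0))
          (nhds (1/2)) := by
        have : Filter.Tendsto (fun ε : ℝ => (1 + ε) / 2) (nhds 0) (nhds ((1 + 0)/2)) :=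
          (Continuous.tendsto (by continuity) 0)
        simpa using this.mono_left nhdsWithin_le_nhds
      have hval : (1/2 : ℝ) / ((1/2 : ℝ) ^ (1/p)) = 2 ^ (-1 + 1/p : ℝ) := by
        rw [Real.rpow_add (by norm_num : (0:ℝ) < 2), Real.rpow_neg_one, one_div (2:ℝ),
          Real.inv_rpow (by norm_num : (0:ℝ) ≤ 2), div_inv_eq_mul]
      have := t4.div t3 (by positivity)
      rwa [hval] at this
    have heq : ∀ᶠ ε : ℝ in nhdsWithin 0 (Set.Ioi 0),
        ENNReal.ofReal (f ε) =
          Wstar (Set.Ioo (0:ℝ) 2) p ((2:ℝ≥0∞)⁻¹ • (Measure.dirac (1:ℝ) + Measure.dirac ε)) /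
            (WprimeZeroPow (Set.Ioo (0:ℝ) 2) p
              ((2:ℝ≥0∞)⁻¹ • (Measure.dirac (1:ℝ) + Measure.dirac ε))) ^ (1/p) := by
      filter_upwards [Ioo_mem_nhdsGT_of_mem (⟨le_refl 0, one_pos⟩ : (0:ℝ) ∈ Set.Ico 0 1)]
        with ε hε
      obtain ⟨hε0, hε1⟩ := hε
      have hd : (0:ℝ) < 1/2 * (1 + ε ^ p) := by
        have := Real.rpow_nonneg hε0.le p
        nlinarith
      rw [Wstar_eval hp hε0 hε1, Wprime_eval hp ⟨hε0, hε1⟩,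
        ENNReal.ofReal_rpow_of_pos hd, hfdef, ENNReal.ofReal_div_of_pos
        (Real.rpow_pos_of_pos hd _)]
    exact (ENNReal.tendsto_ofReal hlim).congr' heq

/-- in `X = ℝ`, `Y = (0,2)`, `μ = (1/2)(δ_1 + δ_ε)`, `ε ∈ (0,1)`:
`W'_p(μ,0)^p = (1/2)(1+ε^p)` and `W*_p(μ)^p = ((1+ε)/2)^p`; as `ε → 0` the ratio
`W*_p(μ)/W'_p(μ,0)` tends to `2^{-1+1/p}`, so the lower bound is sharp. -/
theorem Wstar_lower_bound_sharp (p : ℝ) (hp : 1 ≤ p) :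
    (∀ ε : ℝ, ε ∈ Set.Ioo (0:ℝ) 1 →
      WprimeZeroPow (Set.Ioo (0:ℝ) 2) p
          ((2:ℝ≥0∞)⁻¹ • (Measure.dirac (1:ℝ) + Measure.dirac ε)) =
        ENNReal.ofReal ((1/2) * (1 + ε ^ p)) ∧
      (Wstar (Set.Ioo (0:ℝ) 2) p
          ((2:ℝ≥0∞)⁻¹ • (Measure.dirac (1:ℝ) + Measure.dirac ε))) ^ p =
        ENNReal.ofReal (((1 + ε)/2) ^ p)) ∧
    Filter.Tendsto
      (fun ε : ℝ =>
        Wstar (Set.Ioo (0:ℝ) 2) p ((2:ℝ≥0∞)⁻¹ • (Measure.dirac (1:ℝ) + Measure.dirac ε)) /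
          (WprimeZeroPow (Set.Ioo (0:ℝ) 2) p
            ((2:ℝ≥0∞)⁻¹ • (Measure.dirac (1:ℝ) + Measure.dirac ε))) ^ (1/p))
      (nhdsWithin 0 (Set.Ioi 0))
      (nhds (ENNReal.ofReal (2 ^ (-1 + 1/p : ℝ)))) := by
  exact Wstar_lower_bound_sharp' p hp
end

section
/- For X = ℝ, Y = (-3,3), μ = δ_{-2}, ν = δ_2 and p > 1: W'_p(μ,ν)^p = 2^p while W''_p(μ,ν)^p ≤ 2, where W''_p(μ,ν) := inf{ W_p(μ̌,ν̌) : μ̌,ν̌ finite measures on Y' with μ̌|_Y = μ, ν̌|_Y = ν }. In particular W'_p ≠ W''_p for p > 1. -/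
open MeasureTheory Metric Set
open scoped ENNReal NNReal

/-- Measurable structure on `Option α ≃ α ⊕ Unit`. -/
instance {α : Type*} [MeasurableSpace α] : MeasurableSpace (Option α) :=
  MeasurableSpace.comap (Equiv.optionEquivSumPUnit.{_, _} α) (inferInstance :
    MeasurableSpace (α ⊕ PUnit.{1}))

/-- The shortcut metric `d'` on `Y' = Y ∪ {∂}` (modelled as `Option X`, `none = ∂`):
`d'(x,y) = min (d x y) (d'(x,∂) + d'(y,∂))`, `d'(x,∂) = inf_{z ∈ X\Y} d(x,z)`. -/
noncomputable def shortcut {X : Type*} [MetricSpace X] (Y : Set X) :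
    Option X → Option X → ℝ
  | some x, some y => min (dist x y) (infDist x Yᶜ + infDist y Yᶜ)
  | some x, none => infDist x Yᶜ
  | none, some y => infDist y Yᶜ
  | none, none => 0

/-- Extension of a subprobability on `Y ⊆ X` to a probability on `Y' = Y ∪ {∂}`
by putting the missing mass at `∂`. -/
noncomputable def toProb {X : Type*} [MeasurableSpace X] (μ : Measure X) :
    Measure (Option X) :=
  μ.map some + (1 - μ Set.univ) • Measure.dirac none

/-- The Kantorovich-Wasserstein distance `W'_p` on subprobabilities over `Y`,
induced by the shortcut metric `d'` on `Y' = Y ∪ {∂}`. -/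
noncomputable def Wprime {X : Type*} [MetricSpace X] [MeasurableSpace X] (Y : Set X) (p : ℝ)
    (μ ν : Measure X) : ℝ≥0∞ :=
  (⨅ q : Cpl (toProb μ) (toProb ν),
      ∫⁻ z, ENNReal.ofReal (shortcut Y z.1 z.2 ^ p) ∂q.1) ^ (1/p)

/-- Wasserstein-type transportation cost on `Y' = Y ∪ {∂}` (modelled as `Option X`)
for the shortcut metric `d'`, between measures on `Y'`. -/
noncomputable def WOpt {X : Type*} [MetricSpace X] [MeasurableSpace X] (Y : Set X) (p : ℝ)
    (m₁ m₂ : Measure (Option X)) : ℝ≥0∞ :=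
  (⨅ q : Cpl m₁ m₂, ∫⁻ z, ENNReal.ofReal (shortcut Y z.1 z.2 ^ p) ∂q.1) ^ (1/p)

/-- `W''_p(μ,ν) := inf { W_p(μ̌,ν̌) : μ̌,ν̌ finite measures on Y' extending μ,ν }`,
i.e. arbitrary finite mass may be added at `∂` to both measures. -/
noncomputable def Wpp {X : Type*} [MetricSpace X] [MeasurableSpace X] (Y : Set X) (p : ℝ)
    (μ ν : Measure X) : ℝ≥0∞ :=
  ⨅ (a : ℝ≥0) (b : ℝ≥0),
    WOpt Y p (μ.map some + (a : ℝ≥0∞) • Measure.dirac none)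
      (ν.map some + (b : ℝ≥0∞) • Measure.dirac none)

/- ### auxiliary lemmas -/

lemma measurable_some' {α : Type*} [MeasurableSpace α] : Measurable (some : α → Option α) := by
  intro s hs
  obtain ⟨t, ht, rfl⟩ := hs
  exact measurable_inl ht

instance {α : Type*} [MeasurableSpace α] [MeasurableSingletonClass α] :
    MeasurableSingletonClass (Option α) := by
  constructor
  intro o
  refine ⟨{Equiv.optionEquivSumPUnit α o}, ?_, ?_⟩
  · cases o with
    | none =>
      have : ({Equiv.optionEquivSumPUnit α none} : Set (α ⊕ PUnit.{1}))
          = Sum.inr '' (Set.univ : Set PUnit.{1}) := by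
        ext x; cases x <;> simp [Equiv.optionEquivSumPUnit]
      rw [this]
      exact measurableSet_inr_image.2 MeasurableSet.univ
    | some a =>
      have : ({Equiv.optionEquivSumPUnit α (some a)} : Set (α ⊕ PUnit.{1}))
          = Sum.inl '' {a} := by
        ext x; cases x <;> simp [Equiv.optionEquivSumPUnit]
      rw [this]
      exact MeasurableSet.inl_image (MeasurableSet.singleton a)
  · ext x
    simp [(Equiv.optionEquivSumPUnit α).injective.eq_iff]

lemma ae_eq_of_cpl_dirac {β : Type*} [MeasurableSpace β] [MeasurableSingletonClass β]
    (u v : β) (q : Measure (β × β)) (h1 : q.map Prod.fst = Measure.dirac u)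
    (h2 : q.map Prod.snd = Measure.dirac v) :
    ∀ᵐ z ∂q, z = (u, v) := by
  have hu : q {z | z.1 ≠ u} = 0 := by
    have h : {z : β × β | z.1 ≠ u} = Prod.fst ⁻¹' ({u}ᶜ) := rfl
    rw [h, ← Measure.map_apply measurable_fst (MeasurableSet.singleton u).compl, h1]
    simp
  have hv : q {z | z.2 ≠ v} = 0 := by
    have h : {z : β × β | z.2 ≠ v} = Prod.snd ⁻¹' ({v}ᶜ) := rfl
    rw [h, ← Measure.map_apply measurable_snd (MeasurableSet.singleton v).compl, h2]
    simp
  have : q {z | ¬ z = (u, v)} = 0 := by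
    have hsub : {z : β × β | ¬ z = (u, v)} ⊆ {z | z.1 ≠ u} ∪ {z | z.2 ≠ v} := by
      intro z hz
      by_contra hc
      simp only [Set.mem_setOf_eq, Set.mem_union, not_or, not_not] at hc ⊢
      exact hz (Prod.ext hc.1 hc.2)
    exact le_antisymm (le_trans (measure_mono hsub)
      (le_trans (measure_union_le _ _) (by rw [hu, hv]; simp))) zero_le
  exact this

lemma lintegral_of_cpl_dirac {β : Type*} [MeasurableSpace β] [MeasurableSingletonClass β]
    (u v : β) (q : Measure (β × β)) (h1 : q.map Prod.fst = Measure.dirac u)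
    (h2 : q.map Prod.snd = Measure.dirac v) (f : β × β → ℝ≥0∞) :
    ∫⁻ z, f z ∂q = f (u, v) := by
  have hq : q Set.univ = 1 := by
    have : q Set.univ = (q.map Prod.fst) Set.univ := by
      rw [Measure.map_apply measurable_fst MeasurableSet.univ]; rfl
    rw [this, h1]; simp
  have hae : ∀ᵐ z ∂q, f z = f (u, v) := by
    filter_upwards [ae_eq_of_cpl_dirac u v q h1 h2] with z hz
    rw [hz]
  rw [lintegral_congr_ae hae, lintegral_const, hq, mul_one]

lemma toProb_dirac {X : Type*} [MeasurableSpace X] (a : X) :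
    toProb (Measure.dirac a) = Measure.dirac (some a) := by
  rw [toProb, Measure.map_dirac' measurable_some']
  simp

lemma infd1 : Metric.infDist (-2:ℝ) (Set.Ioo (-3:ℝ) 3)ᶜ = 1 := by
  apply le_antisymm
  · have h : (-3:ℝ) ∈ (Set.Ioo (-3:ℝ) 3)ᶜ := by simp
    have := Metric.infDist_le_dist_of_mem (x := (-2:ℝ)) h
    rw [Real.dist_eq] at this; norm_num at this; exact this
  · by_contra hlt
    push_neg at hlt
    rw [Metric.infDist_lt_iff ⟨-3, by simp⟩] at hlt
    obtain ⟨y, hy, hd⟩ := hlt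
    simp only [Set.mem_compl_iff, Set.mem_Ioo, not_and_or, not_lt] at hy
    rw [Real.dist_eq] at hd
    rcases hy with h | h
    · rw [abs_of_nonneg (by linarith)] at hd; linarith
    · rw [abs_of_nonpos (by linarith)] at hd; linarith

lemma infd2 : Metric.infDist (2:ℝ) (Set.Ioo (-3:ℝ) 3)ᶜ = 1 := by
  apply le_antisymm
  · have h : (3:ℝ) ∈ (Set.Ioo (-3:ℝ) 3)ᶜ := by simp
    have := Metric.infDist_le_dist_of_mem (x := (2:ℝ)) h
    rw [Real.dist_eq] at this; norm_num at this; exact this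
  · by_contra hlt
    push_neg at hlt
    rw [Metric.infDist_lt_iff ⟨-3, by simp⟩] at hlt
    obtain ⟨y, hy, hd⟩ := hlt
    simp only [Set.mem_compl_iff, Set.mem_Ioo, not_and_or, not_lt] at hy
    rw [Real.dist_eq] at hd
    rcases hy with h | h
    · rw [abs_of_nonneg (by linarith)] at hd; linarith
    · rw [abs_of_nonpos (by linarith)] at hd; linarith

lemma sc_main : shortcut (Set.Ioo (-3:ℝ) 3) (some (-2)) (some 2) = 2 := by
  show min (dist (-2:ℝ) 2) _ = 2
  rw [Real.dist_eq, infd1, infd2]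
  norm_num

lemma sc_left : shortcut (Set.Ioo (-3:ℝ) 3) (some (-2)) none = 1 := infd1

lemma sc_right : shortcut (Set.Ioo (-3:ℝ) 3) none (some 2) = 1 := infd2

/-- for `X = ℝ`, `Y = (-3,3)`, `μ = δ_{-2}`, `ν = δ_2`, `p > 1`:
`W'_p(μ,ν)^p = 2^p` while `W''_p(μ,ν)^p ≤ 2`; in particular `W''_p < W'_p`. -/
theorem Wprime_ne_Wpp (p : ℝ) (hp : 1 < p) :
    Wprime (Set.Ioo (-3:ℝ) 3) p (Measure.dirac (-2:ℝ)) (Measure.dirac (2:ℝ)) = 2 ∧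
    (Wpp (Set.Ioo (-3:ℝ) 3) p (Measure.dirac (-2:ℝ)) (Measure.dirac (2:ℝ))) ^ p ≤ 2 ∧
    Wpp (Set.Ioo (-3:ℝ) 3) p (Measure.dirac (-2:ℝ)) (Measure.dirac (2:ℝ)) <
      Wprime (Set.Ioo (-3:ℝ) 3) p (Measure.dirac (-2:ℝ)) (Measure.dirac (2:ℝ)) := by
  have hp0 : (0:ℝ) < p := lt_trans one_pos hp
  have hpne : p ≠ 0 := ne_of_gt hp0
  -- Wprime computation
  have hWprime : Wprime (Set.Ioo (-3:ℝ) 3) p (Measure.dirac (-2:ℝ)) (Measure.dirac (2:ℝ)) = 2 := by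
    rw [Wprime, toProb_dirac, toProb_dirac]
    have hinf : (⨅ q : Cpl (Measure.dirac (some (-2:ℝ))) (Measure.dirac (some (2:ℝ))),
        ∫⁻ z, ENNReal.ofReal (shortcut (Set.Ioo (-3:ℝ) 3) z.1 z.2 ^ p) ∂q.1)
        = ENNReal.ofReal (2 ^ p) := by
      apply le_antisymm
      · refine iInf_le_of_le ⟨Measure.dirac (some (-2:ℝ), some (2:ℝ)), ?_, ?_⟩ ?_
        · rw [Measure.map_dirac' measurable_fst]
        · rw [Measure.map_dirac' measurable_snd]
        · rw [lintegral_dirac]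
          rw [sc_main]
      · refine le_iInf fun q => ?_
        obtain ⟨q, hq1, hq2⟩ := q
        rw [lintegral_of_cpl_dirac _ _ q hq1 hq2]
        rw [sc_main]
    rw [hinf, ← ENNReal.ofReal_rpow_of_pos (by norm_num : (0:ℝ) < 2),
      ENNReal.ofReal_ofNat, ← ENNReal.rpow_mul, mul_one_div_cancel hpne, ENNReal.rpow_one]
  have hWOpt : WOpt (Set.Ioo (-3:ℝ) 3) p
      ((Measure.dirac (-2:ℝ)).map some + (((1:ℝ≥0)):ℝ≥0∞) • Measure.dirac none)
      ((Measure.dirac (2:ℝ)).map some + (((1:ℝ≥0)):ℝ≥0∞) • Measure.dirac none)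
      ≤ (2:ℝ≥0∞) ^ (1/p) := by
    rw [WOpt]
    apply ENNReal.rpow_le_rpow _ (by positivity)
    refine iInf_le_of_le ⟨Measure.dirac (some (-2:ℝ), (none : Option ℝ))
        + Measure.dirac ((none : Option ℝ), some (2:ℝ)), ?_, ?_⟩ ?_
    · rw [Measure.map_add _ _ measurable_fst, Measure.map_dirac' measurable_fst,
        Measure.map_dirac' measurable_fst, Measure.map_dirac' measurable_some']
      simp
    · rw [Measure.map_add _ _ measurable_snd, Measure.map_dirac' measurable_snd,
        Measure.map_dirac' measurable_snd, Measure.map_dirac' measurable_some']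
      simp [add_comm]
    · rw [lintegral_add_measure, lintegral_dirac, lintegral_dirac]
      simp only [sc_left, sc_right, Real.one_rpow, ENNReal.ofReal_one]
      norm_num
  have hWpp : Wpp (Set.Ioo (-3:ℝ) 3) p (Measure.dirac (-2:ℝ)) (Measure.dirac (2:ℝ))
      ≤ (2:ℝ≥0∞) ^ (1/p) := by
    rw [Wpp]
    exact le_trans (iInf_le_of_le (1:ℝ≥0) (iInf_le_of_le (1:ℝ≥0) le_rfl)) hWOpt
  refine ⟨hWprime, ?_, ?_⟩
  · calc Wpp (Set.Ioo (-3:ℝ) 3) p (Measure.dirac (-2:ℝ)) (Measure.dirac (2:ℝ)) ^ p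
        ≤ ((2:ℝ≥0∞) ^ (1/p)) ^ p := ENNReal.rpow_le_rpow hWpp (le_of_lt hp0)
      _ = 2 := by
        rw [← ENNReal.rpow_mul, one_div_mul_cancel hpne, ENNReal.rpow_one]
  · calc Wpp (Set.Ioo (-3:ℝ) 3) p (Measure.dirac (-2:ℝ)) (Measure.dirac (2:ℝ))
        ≤ (2:ℝ≥0∞) ^ (1/p) := hWpp
      _ < (2:ℝ≥0∞) ^ (1:ℝ) := ENNReal.rpow_lt_rpow_of_exponent_lt ENNReal.one_lt_two
        ENNReal.ofNat_ne_top ((div_lt_one hp0).2 hp)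
      _ = Wprime (Set.Ioo (-3:ℝ) 3) p (Measure.dirac (-2:ℝ)) (Measure.dirac (2:ℝ)) := by
        rw [ENNReal.rpow_one, hWprime]
end

section
/- Let X = ℝ, Y = (-2,2), μ = (1/(2n+1)) δ_{-1/2}, ν = (1/(2n+1)) δ_{1/2} for n ≥ 1 a natural number, and p > 1. Then W'_p(μ,ν)^p = 1/(2n+1), while W⁰_p(μ,ν) ≤ 1/(2n+1) < (1/(2n+1))^{1/p} = W'_p(μ,ν). In particular the inequality W'_1 ≤ W^♭_p can be strict. -/
open MeasureTheory Metric Set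
open scoped ENNReal NNReal

instance inst_s8 {α : Type*} [MeasurableSpace α] [MeasurableSingletonClass α] :
    MeasurableSingletonClass (Option α) := by
  constructor
  intro o
  cases o with
  | none =>
    refine ⟨{Sum.inr PUnit.unit}, ?_, ?_⟩
    · rw [show ({Sum.inr PUnit.unit} : Set (α ⊕ PUnit)) = Sum.inr '' {PUnit.unit} by simp]
      exact (MeasurableSet.singleton _).inr_image
    · ext x; cases x <;> simp [Equiv.optionEquivSumPUnit]
  | some a =>
    refine ⟨{Sum.inl a}, ?_, ?_⟩
    · rw [show ({Sum.inl a} : Set (α ⊕ PUnit)) = Sum.inl '' {a} by simp]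
      exact (MeasurableSet.singleton _).inl_image
    · ext x; cases x <;> simp [Equiv.optionEquivSumPUnit]

lemma infD (x : ℝ) (h1 : -2 ≤ x) (h2 : x ≤ 2) :
    infDist x (Ioo (-2:ℝ) 2)ᶜ = min (x+2) (2-x) := by
  apply le_antisymm
  · apply le_min
    · calc infDist x (Ioo (-2:ℝ) 2)ᶜ ≤ dist x (-2) := infDist_le_dist_of_mem (by simp)
        _ = x + 2 := by rw [Real.dist_eq, abs_of_nonneg (by linarith)]; ring
    · calc infDist x (Ioo (-2:ℝ) 2)ᶜ ≤ dist x 2 := infDist_le_dist_of_mem (by simp)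
        _ = 2 - x := by rw [Real.dist_eq, abs_of_nonpos (by linarith)]; ring
  · by_contra hlt
    push_neg at hlt
    obtain ⟨y, hy, hd⟩ := (infDist_lt_iff ⟨2, by simp⟩).mp hlt
    simp only [mem_compl_iff, mem_Ioo, not_and, not_lt] at hy
    rw [Real.dist_eq] at hd
    rcases le_or_gt y (-2) with h | h
    · rw [abs_of_nonneg (by linarith)] at hd
      have := min_le_left (x+2) (2-x); linarith
    · have h2y := hy h
      rw [abs_of_nonpos (by linarith)] at hd
      have := min_le_right (x+2) (2-x); linarith

/-- Atom positions for the upper-bound witness. -/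
noncomputable def xx (n k : ℕ) : ℝ := 2*k/(2*n+1) - 1/2

noncomputable def yy (n k : ℕ) : ℝ := -(xx n k)

lemma dxy (n a b : ℕ)
    (h : 2*(a:ℝ) + 2*b - (2*n+1) = 1 ∨ 2*(a:ℝ) + 2*b - (2*n+1) = -1) :
    dist (xx n a) (yy n b) = 1/(2*n+1) := by
  have hpos : (0:ℝ) < 2*n+1 := by positivity
  have hd : xx n a - yy n b = (2*a + 2*b - (2*n+1))/(2*n+1) := by
    simp only [xx, yy]; field_simp; ring
  rw [Real.dist_eq, hd]
  rcases h with h | h <;> rw [h] <;> rw [abs_div, abs_of_pos hpos] <;> norm_num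

lemma map_finsetSum_meas {α β ι : Type*} [MeasurableSpace α] [MeasurableSpace β]
    (s : Finset ι) (μ : ι → Measure α) {f : α → β} (hf : Measurable f) :
    (∑ i ∈ s, μ i).map f = ∑ i ∈ s, (μ i).map f := by
  induction s using Finset.cons_induction with
  | empty => simp
  | cons a s ha ih => rw [Finset.sum_cons, Finset.sum_cons, Measure.map_add _ _ hf, ih]

set_option maxHeartbeats 1000000 in
/-- for `X = ℝ`, `Y = (-2,2)`, `μ = (2n+1)⁻¹ δ_{-1/2}`, `ν = (2n+1)⁻¹ δ_{1/2}`,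
`n ≥ 1`, `p > 1`: `W'_p(μ,ν)^p = 1/(2n+1)` while
`W⁰_p(μ,ν) ≤ 1/(2n+1) < (1/(2n+1))^{1/p} = W'_p(μ,ν)`. -/
theorem W0_lt_Wprime (n : ℕ) (hn : 1 ≤ n) (p : ℝ) (hp : 1 < p) :
    Wprime (Set.Ioo (-2:ℝ) 2) p
        ((2 * (n : ℝ≥0∞) + 1)⁻¹ • Measure.dirac (-(1/2) : ℝ))
        ((2 * (n : ℝ≥0∞) + 1)⁻¹ • Measure.dirac ((1/2) : ℝ)) =
      ((2 * (n : ℝ≥0∞) + 1)⁻¹) ^ (1/p) ∧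
    W0 (Set.Ioo (-2:ℝ) 2) p
        ((2 * (n : ℝ≥0∞) + 1)⁻¹ • Measure.dirac (-(1/2) : ℝ))
        ((2 * (n : ℝ≥0∞) + 1)⁻¹ • Measure.dirac ((1/2) : ℝ)) ≤
      (2 * (n : ℝ≥0∞) + 1)⁻¹ ∧
    (2 * (n : ℝ≥0∞) + 1)⁻¹ < ((2 * (n : ℝ≥0∞) + 1)⁻¹) ^ (1/p) := by
  have hp0 : (0:ℝ) < p := lt_trans one_pos hp
  have hp0' : p ≠ 0 := ne_of_gt hp0
  set c : ℝ≥0∞ := (2 * (n : ℝ≥0∞) + 1)⁻¹ with hc_def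
  have hden_ne_top : (2 * (n:ℝ≥0∞) + 1) ≠ ⊤ :=
    ENNReal.add_ne_top.mpr ⟨ENNReal.mul_ne_top (by simp) (by simp), by simp⟩
  have hden_ne_zero : (2 * (n:ℝ≥0∞) + 1) ≠ 0 := by simp
  have hc_ne_zero : c ≠ 0 := ENNReal.inv_ne_zero.mpr hden_ne_top
  have hc_ne_top : c ≠ ⊤ := ENNReal.inv_ne_top.mpr hden_ne_zero
  have hmul : (2 * (n:ℝ≥0∞) + 1) * c = 1 := ENNReal.mul_inv_cancel hden_ne_zero hden_ne_top
  have hc_lt_one : c < 1 := by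
    rw [hc_def, ENNReal.inv_lt_one]
    calc (1:ℝ≥0∞) < 2 := by norm_num
      _ ≤ 2 * n := le_mul_of_one_le_right (by norm_num) (by exact_mod_cast hn)
      _ ≤ 2*n+1 := le_self_add
  have hrpos : (0:ℝ) < 2*n+1 := by positivity
  have hofc : ENNReal.ofReal (1/(2*(n:ℝ)+1)) = c := by
    rw [hc_def, show ((2*(n:ℝ≥0∞)+1)) = ENNReal.ofReal (2*(n:ℝ)+1) by
      rw [ENNReal.ofReal_add (by positivity) (by norm_num), ENNReal.ofReal_mul (by norm_num)]
      simp]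
    rw [one_div, ← ENNReal.ofReal_inv_of_pos hrpos]
  have hEpow : (ENNReal.ofReal ((1/(2*(n:ℝ)+1)) ^ p)) ^ (1/p) = c := by
    rw [ENNReal.ofReal_rpow_of_pos (by positivity),
      ← Real.rpow_mul (by positivity : (0:ℝ) ≤ 1/(2*(n:ℝ)+1)),
      mul_one_div_cancel hp0', Real.rpow_one, hofc]
  refine ⟨?_, ?_, ?_⟩
  · -- Part 1 : Wprime = c ^ (1/p)
    set Y : Set ℝ := Set.Ioo (-2:ℝ) 2 with hY
    set μ : Measure ℝ := c • Measure.dirac (-(1/2) : ℝ) with hμ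
    set ν : Measure ℝ := c • Measure.dirac ((1/2) : ℝ) with hν
    set a : Option ℝ := some (-(1/2) : ℝ) with ha
    set b : Option ℝ := some ((1/2) : ℝ) with hb
    have hia : infDist (-(1/2):ℝ) Yᶜ = 3/2 := by
      rw [hY, infD _ (by norm_num) (by norm_num)]; norm_num
    have hib : infDist ((1/2):ℝ) Yᶜ = 3/2 := by
      rw [hY, infD _ (by norm_num) (by norm_num)]; norm_num
    have hsab : shortcut Y a b = 1 := by
      rw [ha, hb]
      show min (dist (-(1/2):ℝ) ((1/2):ℝ)) (infDist (-(1/2):ℝ) Yᶜ + infDist ((1/2):ℝ) Yᶜ) = 1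
      rw [hia, hib, Real.dist_eq]
      norm_num
    have hsan : shortcut Y a none = 3/2 := by
      rw [ha]
      show infDist (-(1/2):ℝ) Yᶜ = 3/2
      exact hia
    have hsnn : shortcut Y (none : Option ℝ) none = 0 := rfl
    have hμu : μ Set.univ = c := by
      rw [hμ, Measure.smul_apply, Measure.dirac_apply]
      simp
    have hνu : ν Set.univ = c := by
      rw [hν, Measure.smul_apply, Measure.dirac_apply]
      simp
    have htoμ : toProb μ = c • Measure.dirac a + (1-c) • Measure.dirac (none : Option ℝ) := by
      rw [toProb, hμu, hμ, Measure.map_smul, Measure.map_dirac' measurable_some']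
    have htoν : toProb ν = c • Measure.dirac b + (1-c) • Measure.dirac (none : Option ℝ) := by
      rw [toProb, hνu, hν, Measure.map_smul, Measure.map_dirac' measurable_some']
    rw [Wprime]
    congr 1
    apply le_antisymm
    · -- upper bound
      set q0 : Measure (Option ℝ × Option ℝ) :=
        c • Measure.dirac (a, b) + (1 - c) • Measure.dirac ((none : Option ℝ), (none : Option ℝ))
        with hq0
      have hq0f : q0.map Prod.fst = toProb μ := by
        rw [hq0, Measure.map_add _ _ measurable_fst, Measure.map_smul, Measure.map_smul,
          Measure.map_dirac' measurable_fst, Measure.map_dirac' measurable_fst, htoμ]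
      have hq0s : q0.map Prod.snd = toProb ν := by
        rw [hq0, Measure.map_add _ _ measurable_snd, Measure.map_smul, Measure.map_smul,
          Measure.map_dirac' measurable_snd, Measure.map_dirac' measurable_snd, htoν]
      refine le_trans (iInf_le _ (⟨q0, hq0f, hq0s⟩ : ↥(Cpl (toProb μ) (toProb ν))))
        (le_of_eq ?_)
      show (∫⁻ z, ENNReal.ofReal (shortcut Y z.1 z.2 ^ p) ∂q0) = c
      rw [hq0, lintegral_add_measure, lintegral_smul_measure, lintegral_smul_measure,
        lintegral_dirac, lintegral_dirac]
      show c * ENNReal.ofReal (shortcut Y a b ^ p)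
          + (1-c) * ENNReal.ofReal (shortcut Y (none : Option ℝ) none ^ p) = c
      rw [hsab, hsnn, Real.one_rpow, Real.zero_rpow hp0', ENNReal.ofReal_one,
        ENNReal.ofReal_zero, mul_one, mul_zero, add_zero]
    · -- lower bound
      refine le_iInf fun q => ?_
      obtain ⟨hf, hs⟩ := q.2
      set S : Set (Option ℝ × Option ℝ) :=
        Prod.fst ⁻¹' {a} ∩ Prod.snd ⁻¹' ({b, none} : Set (Option ℝ)) with hSdef
      have hmbn : MeasurableSet ({b, (none : Option ℝ)} : Set (Option ℝ)) :=
        (measurableSet_singleton (none : Option ℝ)).insert b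
      have hSm : MeasurableSet S :=
        ((measurableSet_singleton a).preimage measurable_fst).inter
          (hmbn.preimage measurable_snd)
      have hA : q.1 (Prod.snd ⁻¹' ({b, (none : Option ℝ)}ᶜ)) = 0 := by
        rw [← Measure.map_apply measurable_snd hmbn.compl, hs, htoν]
        rw [Measure.add_apply, Measure.smul_apply, Measure.smul_apply,
          Measure.dirac_apply, Measure.dirac_apply]
        simp
      have hB : q.1 (Prod.fst ⁻¹' {a}) = c := by
        rw [← Measure.map_apply measurable_fst (measurableSet_singleton a), hf, htoμ]
        rw [Measure.add_apply, Measure.smul_apply, Measure.smul_apply,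
          Measure.dirac_apply, Measure.dirac_apply]
        simp [ha]
      have hqS : c ≤ q.1 S := by
        calc c = q.1 (Prod.fst ⁻¹' {a}) := hB.symm
          _ ≤ q.1 (S ∪ Prod.snd ⁻¹' ({b, (none : Option ℝ)}ᶜ)) := by
              refine measure_mono ?_
              intro z hz
              by_cases h2 : z.2 ∈ ({b, (none : Option ℝ)} : Set (Option ℝ))
              · exact Or.inl ⟨hz, h2⟩
              · exact Or.inr h2
          _ ≤ q.1 S + q.1 (Prod.snd ⁻¹' ({b, (none : Option ℝ)}ᶜ)) := measure_union_le _ _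
          _ = q.1 S := by rw [hA, add_zero]
      calc c ≤ q.1 S := hqS
        _ = ∫⁻ _ in S, 1 ∂q.1 := (setLIntegral_one _).symm
        _ ≤ ∫⁻ z in S, ENNReal.ofReal (shortcut Y z.1 z.2 ^ p) ∂q.1 := by
            refine setLIntegral_mono' hSm ?_
            intro z hz
            obtain ⟨hz1, hz2⟩ := hz
            have hz1' : z.1 = a := hz1
            rcases hz2 with h2 | h2
            · rw [hz1', show z.2 = b from h2, hsab, Real.one_rpow, ENNReal.ofReal_one]
            · rw [hz1', show z.2 = none from h2, hsan]
              refine ENNReal.one_le_ofReal.mpr ?_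
              exact Real.one_le_rpow (by norm_num) (le_of_lt hp0)
        _ ≤ ∫⁻ z, ENNReal.ofReal (shortcut Y z.1 z.2 ^ p) ∂q.1 :=
            setLIntegral_le_lintegral _ _
  · -- Part 2 : W0 ≤ c
    set E : ℝ≥0∞ := ENNReal.ofReal ((1/(2*(n:ℝ)+1)) ^ p) with hE_def
    set ρ : Measure ℝ := ∑ k ∈ Finset.range n, c • Measure.dirac (xx n (k+1)) with hρ
    set η : Measure ℝ := ∑ k ∈ Finset.range n, c • Measure.dirac (yy n (k+1)) with hη
    set μ : Measure ℝ := c • Measure.dirac (-(1/2) : ℝ) with hμ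
    set ν : Measure ℝ := c • Measure.dirac ((1/2) : ℝ) with hν
    have hx0 : (-(1/2) : ℝ) = xx n 0 := by simp [xx]
    have hy0 : ((1/2) : ℝ) = yy n 0 := by simp [xx, yy]
    have hconμ : (μ + (2:ℝ≥0∞) • ρ) Set.univ = 1 := by
      rw [Measure.add_apply, Measure.smul_apply, hρ]
      simp only [Measure.coe_finset_sum, Finset.sum_apply, Measure.smul_apply,
        Measure.dirac_apply, Set.mem_univ, Set.indicator_of_mem, Pi.one_apply, smul_eq_mul,
        mul_one, Finset.sum_const, Finset.card_range, nsmul_eq_mul]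
      rw [← hmul]; ring
    have hconν : (ν + (2:ℝ≥0∞) • η) Set.univ = 1 := by
      rw [Measure.add_apply, Measure.smul_apply, hη]
      simp only [Measure.coe_finset_sum, Finset.sum_apply, Measure.smul_apply,
        Measure.dirac_apply, Set.mem_univ, Set.indicator_of_mem, Pi.one_apply, smul_eq_mul,
        mul_one, Finset.sum_const, Finset.card_range, nsmul_eq_mul]
      rw [← hmul]; ring
    have hW0le : W0 (Set.Ioo (-2:ℝ) 2) p μ ν ≤ Wtilde (Set.Ioo (-2:ℝ) 2) p (μ + ρ, ρ) (ν + η, η) := by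
      rw [W0]
      exact iInf_le _ (⟨(ρ, η), ⟨hconμ, hconν⟩⟩ :
        {re : Measure ℝ × Measure ℝ //
          (μ + (2 : ℝ≥0∞) • re.1) Set.univ = 1 ∧ (ν + (2 : ℝ≥0∞) • re.2) Set.univ = 1})
    refine le_trans hW0le ?_
    -- now bound Wtilde by the explicit plan
    set Q1 : Measure (ℝ × ℝ) :=
      ∑ k ∈ Finset.range (n+1), c • Measure.dirac (xx n k, yy n (n - k)) with hQ1
    set Q4 : Measure (ℝ × ℝ) :=
      ∑ k ∈ Finset.range n, c • Measure.dirac (xx n (k+1), yy n (n - k)) with hQ4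
    have hm1 : (Q1 + (0 : Measure (ℝ×ℝ))).map Prod.fst = μ + ρ := by
      rw [add_zero, hQ1, map_finsetSum_meas _ _ measurable_fst]
      simp only [Measure.map_smul, Measure.map_dirac' measurable_fst]
      rw [Finset.sum_range_succ']
      rw [add_comm, hμ, hρ, hx0]
    have hm2 : ((0 : Measure (ℝ×ℝ)) + Q4).map Prod.fst = ρ := by
      rw [zero_add, hQ4, map_finsetSum_meas _ _ measurable_fst]
      simp only [Measure.map_smul, Measure.map_dirac' measurable_fst]
      rw [hρ]
    have hm3 : (Q1 + (0 : Measure (ℝ×ℝ))).map Prod.snd = ν + η := by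
      rw [add_zero, hQ1, map_finsetSum_meas _ _ measurable_snd]
      simp only [Measure.map_smul, Measure.map_dirac' measurable_snd]
      have hrefl := Finset.sum_range_reflect (fun k => c • Measure.dirac (yy n k)) (n+1)
      simp only [Nat.add_sub_cancel] at hrefl
      rw [show (∑ k ∈ Finset.range (n+1), c • Measure.dirac (yy n (n - k)))
          = ∑ k ∈ Finset.range (n+1), c • Measure.dirac (yy n k) from hrefl]
      rw [Finset.sum_range_succ']
      rw [add_comm, hν, hη, hy0]
    have hm4 : ((0 : Measure (ℝ×ℝ)) + Q4).map Prod.snd = η := by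
      rw [zero_add, hQ4, map_finsetSum_meas _ _ measurable_snd]
      simp only [Measure.map_smul, Measure.map_dirac' measurable_snd]
      have hcongr : ∀ j ∈ Finset.range n,
          c • Measure.dirac (yy n (n - j))
            = (fun i => c • Measure.dirac (yy n (i+1))) (n - 1 - j) := by
        intro j hj
        simp only [Finset.mem_range] at hj
        have : n - j = (n - 1 - j) + 1 := by omega
        simp only [this]
      rw [Finset.sum_congr rfl hcongr,
        show (∑ j ∈ Finset.range n, (fun i => c • Measure.dirac (yy n (i+1))) (n - 1 - j))
            = ∑ j ∈ Finset.range n, c • Measure.dirac (yy n (j+1))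
          from Finset.sum_range_reflect (fun i => c • Measure.dirac (yy n (i+1))) n, hη]
    have hcost1 : tcost (fun x y => dist x y) p Q1 = (n+1 : ℝ≥0∞) * (c * E) := by
      rw [tcost, hQ1, lintegral_finset_sum_measure]
      simp only [lintegral_smul_measure, lintegral_dirac]
      have : ∀ k ∈ Finset.range (n+1),
          c * ENNReal.ofReal (dist (xx n k, yy n (n-k)).1 (xx n k, yy n (n-k)).2 ^ p)
            = c * E := by
        intro k hk
        simp only [Finset.mem_range, Nat.lt_succ_iff] at hk
        have hcast : ((n - k : ℕ) : ℝ) = (n:ℝ) - k := by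
          rw [Nat.cast_sub hk]
        have hd : dist (xx n k) (yy n (n-k)) = 1/(2*n+1) :=
          dxy n k (n-k) (Or.inr (by rw [hcast]; ring))
        simp only [hd, hE_def]
      rw [Finset.sum_congr rfl (@id (∀ k ∈ Finset.range (n+1),
          c • ENNReal.ofReal (dist (xx n k) (yy n (n-k)) ^ p) = c * E) this), Finset.sum_const, Finset.card_range, nsmul_eq_mul]
      push_cast
      ring
    have hcost4 : tcost (fun x y => dist x y) p Q4 = (n : ℝ≥0∞) * (c * E) := by
      rw [tcost, hQ4, lintegral_finset_sum_measure]
      simp only [lintegral_smul_measure, lintegral_dirac]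
      have : ∀ k ∈ Finset.range n,
          c * ENNReal.ofReal (dist (xx n (k+1), yy n (n-k)).1 (xx n (k+1), yy n (n-k)).2 ^ p)
            = c * E := by
        intro k hk
        simp only [Finset.mem_range] at hk
        have hcast : ((n - k : ℕ) : ℝ) = (n:ℝ) - k := by
          rw [Nat.cast_sub (le_of_lt hk)]
        have hd : dist (xx n (k+1)) (yy n (n-k)) = 1/(2*n+1) :=
          dxy n (k+1) (n-k) (Or.inl (by rw [hcast]; push_cast; ring))
        simp only [hd, hE_def]
      rw [Finset.sum_congr rfl (@id (∀ k ∈ Finset.range n,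
          c • ENNReal.ofReal (dist (xx n (k+1)) (yy n (n-k)) ^ p) = c * E) this), Finset.sum_const, Finset.card_range, nsmul_eq_mul]
    have hwt : Wtilde (Set.Ioo (-2:ℝ) 2) p (μ + ρ, ρ) (ν + η, η) ≤ E ^ (1/p) := by
      rw [Wtilde]
      refine ENNReal.rpow_le_rpow ?_ (by positivity)
      have h0 : tcost (dstar (Set.Ioo (-2:ℝ) 2)) p (0 : Measure (ℝ×ℝ)) = 0 := by
        rw [tcost]; exact lintegral_zero_measure _
      have hval : tcost (fun x y => dist x y) p Q1
            + tcost (dstar (Set.Ioo (-2:ℝ) 2)) p (0 : Measure (ℝ×ℝ))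
            + tcost (dstar (Set.Ioo (-2:ℝ) 2)) p (0 : Measure (ℝ×ℝ))
            + tcost (fun x y => dist x y) p Q4 = E := by
        rw [hcost1, hcost4, h0, add_zero, add_zero]
        calc (↑n+1 : ℝ≥0∞) * (c * E) + (n : ℝ≥0∞) * (c * E)
            = ((2 * (n:ℝ≥0∞) + 1) * c) * E := by ring
          _ = E := by rw [hmul, one_mul]
      refine le_trans (iInf_le _ ⟨(Q1, 0, 0, Q4), hm1, hm2, hm3, hm4⟩) (le_of_eq hval)
    calc Wtilde (Set.Ioo (-2:ℝ) 2) p (μ + ρ, ρ) (ν + η, η) ≤ E ^ (1/p) := hwt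
      _ = c := hEpow
  · -- Part 3 : c < c ^ (1/p)
    conv_lhs => rw [← ENNReal.rpow_one c]
    exact ENNReal.rpow_lt_rpow_of_exponent_gt (pos_iff_ne_zero.mpr hc_ne_zero) hc_lt_one
      (by rw [div_lt_one hp0]; exact hp)
end

section
/- Let μ, ν be subprobability measures on Y with finite first moments and μ(Y) ≥ ν(Y). Then for any z ∈ X\Y, W¹₀(μ,ν) ≤ inf { W₁(μ₁,ν) + ∫_X d(x,z) dμ₀(x) : μ = μ₁ + μ₀, μ₁(Y) = ν(Y) }, i.e. the transportation-annihilation pre-distance is bounded by transporting a part of μ of mass ν(Y) to ν and annihilating the remainder over the point z. -/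
open MeasureTheory Metric Set
open scoped ENNReal NNReal

/-- for subprobabilities `μ,ν` on `Y` with finite first moments and
`μ(Y) ≥ ν(Y)`, and any `z ∈ X \ Y`:
`W⁰₁(μ,ν) ≤ inf { W₁(μ₁,ν) + ∫ d(x,z) dμ₀ : μ = μ₁ + μ₀, μ₁(Y) = ν(Y) }`. -/
theorem W0_le_transport_annihilate {X : Type*} [MetricSpace X] [MeasurableSpace X]
    [BorelSpace X]
    (Y : Set X) (hYopen : IsOpen Y) (hYne : Y.Nonempty) (hYproper : Y ≠ Set.univ)
    (μ ν : Measure X)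
    (hμsub : μ Set.univ ≤ 1) (hνsub : ν Set.univ ≤ 1)
    (hμY : μ Yᶜ = 0) (hνY : ν Yᶜ = 0)
    (hμmom : ∃ x₀ : X, (∫⁻ x, ENNReal.ofReal (dist x x₀) ∂μ) < ∞)
    (hνmom : ∃ x₀ : X, (∫⁻ x, ENNReal.ofReal (dist x x₀) ∂ν) < ∞)
    (hmass : ν Set.univ ≤ μ Set.univ)
    (z : X) (hz : z ∈ Yᶜ) :
    W0 Y 1 μ ν ≤
      ⨅ d : {d : Measure X × Measure X // μ = d.1 + d.2 ∧ d.1 Set.univ = ν Set.univ},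
        ((⨅ q : Cpl d.1.1 ν, tcost (fun a b => dist a b) 1 q.1) +
          ∫⁻ x, ENNReal.ofReal (dist x z) ∂d.1.2) := by
  refine le_iInf ?_
  rintro ⟨⟨μ₁, μ₀⟩, hsum, hm1⟩
  simp only at hsum hm1 ⊢
  rw [ENNReal.iInf_add]
  refine le_iInf ?_
  rintro ⟨q, hq1, hq2⟩
  -- notation
  set m := μ Set.univ with hm
  set n := ν Set.univ with hn
  set a : ℝ≥0∞ := 2⁻¹ * (1 - m) with ha
  set ρ : Measure X := a • Measure.dirac z with hρ
  set ξ : Measure X := (2⁻¹ : ℝ≥0∞) • μ₀ with hξ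
  set η : Measure X := ξ + a • Measure.dirac z with hη
  have hdiag : Measurable (fun x : X => (x, x)) := measurable_id.prodMk measurable_id
  set D : Measure (X × X) := ξ.map (fun x => (x, x)) with hD
  set P : Measure (X × X) := a • Measure.dirac (z, z) with hP
  have htwo : (2 : ℝ≥0∞) * 2⁻¹ = 1 := ENNReal.mul_inv_cancel two_ne_zero (by norm_num)
  have hnne : n ≠ ∞ := (lt_of_le_of_lt hνsub ENNReal.one_lt_top).ne
  have hμ0u : μ₀ Set.univ = m - n := by
    have h : m = n + μ₀ Set.univ := by
      rw [hm, hsum]; simp [Measure.add_apply, hm1, hn]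
    rw [h, ENNReal.add_sub_cancel_left hnne]
  -- the two mass constraints
  have hc1 : (μ + (2 : ℝ≥0∞) • ρ) Set.univ = 1 := by
    simp only [hρ, Measure.add_apply, Measure.smul_apply, smul_eq_mul,
      MeasureTheory.measure_univ, mul_one]
    rw [ha, ← mul_assoc, htwo, one_mul, ← hm, add_tsub_cancel_of_le hμsub]
  have hc2 : (ν + (2 : ℝ≥0∞) • η) Set.univ = 1 := by
    simp only [hη, hξ, Measure.add_apply, Measure.smul_apply, smul_eq_mul,
      MeasureTheory.measure_univ, mul_one, hμ0u]
    rw [ha, mul_add, ← mul_assoc, ← mul_assoc, htwo, one_mul, one_mul, ← hn,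
      add_comm (m - n) (1 - m), tsub_add_tsub_cancel hμsub hmass,
      add_tsub_cancel_of_le hνsub]
  refine (iInf_le _ ⟨(ρ, η), hc1, hc2⟩).trans ?_
  simp only [Wtilde]
  rw [show (1 : ℝ) / 1 = 1 from by norm_num, ENNReal.rpow_one]
  have hξξ : ξ + ξ = μ₀ := by
    rw [hξ, ← two_smul ℝ≥0∞, smul_smul, htwo, one_smul]
  have hDfst : D.map Prod.fst = ξ := by
    rw [hD, Measure.map_map measurable_fst hdiag]
    exact Measure.map_id
  have hDsnd : D.map Prod.snd = ξ := by
    rw [hD, Measure.map_map measurable_snd hdiag]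
    exact Measure.map_id
  have hPfst : P.map Prod.fst = a • Measure.dirac z := by
    rw [hP, Measure.map_smul, Measure.map_dirac' measurable_fst]
  have hPsnd : P.map Prod.snd = a • Measure.dirac z := by
    rw [hP, Measure.map_smul, Measure.map_dirac' measurable_snd]
  refine iInf_le_of_le ⟨(q + D + P, D, 0, P), ?_, ?_, ?_, ?_⟩ ?_
  · -- (q + D + P + D).map fst = μ + ρ
    simp only [Measure.map_add _ _ measurable_fst, hq1, hDfst, hPfst, hρ, hsum]
    rw [← hξξ]; abel
  · -- (0 + P).map fst = ρ
    simp only [zero_add, hPfst, hρ]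
  · -- (q + D + P + 0).map snd = ν + η
    simp only [add_zero, Measure.map_add _ _ measurable_snd, hq2, hDsnd, hPsnd, hη]
    abel
  · -- (D + P).map snd = η
    simp only [Measure.map_add _ _ measurable_snd, hDsnd, hPsnd, hη]
  · -- cost bound
    have hQ1 : tcost (fun x y => dist x y) 1 (q + D + P)
        = tcost (fun x y => dist x y) 1 q + tcost (fun x y => dist x y) 1 D
          + tcost (fun x y => dist x y) 1 P := by
      simp only [tcost, lintegral_add_measure]
    have hDdist : tcost (fun x y => dist x y) 1 D = 0 := by
      refine le_antisymm ?_ (zero_le)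
      refine le_trans (lintegral_map_le _ (fun x : X => (x, x))) ?_
      simp [Real.rpow_one]
    have hPdist : tcost (fun x y => dist x y) 1 P = 0 := by
      simp [tcost, hP, lintegral_smul_measure, lintegral_dirac, Real.rpow_one]
    have h0 : tcost (dstar Y) 1 (0 : Measure (X × X)) = 0 := by
      simp [tcost]
    have hC : tcost (dstar Y) 1 D ≤ ∫⁻ x, ENNReal.ofReal (dist x z) ∂μ₀ := by
      refine le_trans (lintegral_map_le _ (fun x : X => (x, x))) ?_
      have h2 : ∀ x : X, ENNReal.ofReal (dstar Y x x ^ (1 : ℝ))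
          ≤ 2 * ENNReal.ofReal (dist x z) := by
        intro x
        rw [Real.rpow_one]
        have hb : dstar Y x x ≤ dist x z + dist z x := by
          refine ciInf_le ⟨0, ?_⟩ (⟨z, hz⟩ : (Yᶜ : Set X))
          rintro r ⟨w, rfl⟩; positivity
        calc ENNReal.ofReal (dstar Y x x) ≤ ENNReal.ofReal (dist x z + dist z x) :=
              ENNReal.ofReal_le_ofReal hb
          _ = ENNReal.ofReal (2 * dist x z) := by rw [dist_comm z x, two_mul]
          _ = 2 * ENNReal.ofReal (dist x z) := by
              rw [ENNReal.ofReal_mul (by norm_num)]; norm_num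
      calc ∫⁻ x, ENNReal.ofReal (dstar Y x x ^ (1 : ℝ)) ∂ξ
          ≤ ∫⁻ x, 2 * ENNReal.ofReal (dist x z) ∂ξ := lintegral_mono h2
        _ = 2⁻¹ * ∫⁻ x, 2 * ENNReal.ofReal (dist x z) ∂μ₀ := by
            rw [hξ, lintegral_smul_measure, smul_eq_mul]
        _ = 2⁻¹ * (2 * ∫⁻ x, ENNReal.ofReal (dist x z) ∂μ₀) := by
            rw [lintegral_const_mul _
              ((by fun_prop : Measurable fun x : X => ENNReal.ofReal (dist x z)))]
        _ = ∫⁻ x, ENNReal.ofReal (dist x z) ∂μ₀ := by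
            rw [← mul_assoc, ENNReal.inv_mul_cancel two_ne_zero (by norm_num), one_mul]
    rw [hQ1, hDdist, hPdist, h0]
    simp only [add_zero]
    exact add_le_add_right hC _
end
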